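/- arXiv:2007.01653 — 5 statements merged into one kernel-verified Lean document; each statement's English description precedes it below -/
import Mathlib

section
/- In the HAM setting, the map $A=(A_1,A_2)$ defined on pairs $\phi=(\phi_1,\phi_2)$ of bounded measurable functions on $[0,1]$ by $A_i[\phi](x)=\phi_i(x)+c_{i0}N_i[\phi](x)$ ($i=1,2$) is Lipschitz with constant $\delta_{c_0}$ for the norm $\|\cdot\|$: for any two pairs $\phi,\psi$ of bounded measurable functions on $[0,1]$, $\|A[\phi]-A[\psi]\|\le\delta_{c_0}\,\|\phi-\psi\|$. -/
open MeasureTheory Set Filter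

/-- The nonlinear integral operator `N_i[φ](x) = φ_i(x) - α_i - ∫₀¹ G_i(x,s) p_i(s) f_i(s,φ₁(s),φ₂(s)) ds`.
`φi` is the leading component (φ₁ for `i = 1`, φ₂ for `i = 2`). -/
noncomputable def hamN (G : ℝ → ℝ → ℝ) (p : ℝ → ℝ) (f : ℝ → ℝ → ℝ → ℝ)
    (α : ℝ) (φi φ₁ φ₂ : ℝ → ℝ) (x : ℝ) : ℝ :=
  φi x - α - ∫ s in Icc (0:ℝ) 1, G x s * p s * f s (φ₁ s) (φ₂ s)

/-- The norm `‖u‖ = sup_{x ∈ [0,1]} max (|u₁ x|) (|u₂ x|)` on pairs of functions. -/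
noncomputable def hamNorm (u₁ u₂ : ℝ → ℝ) : ℝ :=
  ⨆ x : Icc (0:ℝ) 1, max |u₁ (x : ℝ)| |u₂ (x : ℝ)|

lemma ham_aesm (f : ℝ → ℝ → ℝ → ℝ)
    (hf : ContinuousOn (fun q : ℝ × ℝ × ℝ => f q.1 q.2.1 q.2.2)
      (Icc (0:ℝ) 1 ×ˢ (univ : Set (ℝ × ℝ))))
    (φ₁ φ₂ : ℝ → ℝ)
    (h1 : Measurable ((Icc (0:ℝ) 1).restrict φ₁))
    (h2 : Measurable ((Icc (0:ℝ) 1).restrict φ₂)) :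
    AEStronglyMeasurable (fun s => f s (φ₁ s) (φ₂ s))
      (volume.restrict (Icc (0:ℝ) 1)) := by
  rw [← map_comap_subtype_coe measurableSet_Icc]
  rw [(MeasurableEmbedding.subtype_coe measurableSet_Icc).aestronglyMeasurable_map_iff]
  apply Measurable.aestronglyMeasurable
  have hT : Measurable (fun y : Icc (0:ℝ) 1 => (((y : ℝ), φ₁ y, φ₂ y) : ℝ × ℝ × ℝ)) :=
    measurable_subtype_coe.prodMk (h1.prodMk h2)
  have hTm : Measurable (fun y : Icc (0:ℝ) 1 =>
      (⟨((y : ℝ), φ₁ y, φ₂ y), ⟨y.2, trivial⟩⟩ : (Icc (0:ℝ) 1 ×ˢ (univ : Set (ℝ × ℝ))))) :=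
    hT.subtype_mk
  exact hf.restrict.measurable.comp hTm

lemma ham_bound (f : ℝ → ℝ → ℝ → ℝ)
    (hf : ContinuousOn (fun q : ℝ × ℝ × ℝ => f q.1 q.2.1 q.2.2)
      (Icc (0:ℝ) 1 ×ˢ (univ : Set (ℝ × ℝ))))
    (φ₁ φ₂ : ℝ → ℝ)
    (hb₁ : ∃ C, ∀ x ∈ Icc (0:ℝ) 1, |φ₁ x| ≤ C)
    (hb₂ : ∃ C, ∀ x ∈ Icc (0:ℝ) 1, |φ₂ x| ≤ C) :
    ∃ C, ∀ s ∈ Icc (0:ℝ) 1, |f s (φ₁ s) (φ₂ s)| ≤ C := by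
  obtain ⟨B₁, hB₁⟩ := hb₁
  obtain ⟨B₂, hB₂⟩ := hb₂
  set K : Set (ℝ × ℝ × ℝ) := Icc (0:ℝ) 1 ×ˢ (Icc (-B₁) B₁ ×ˢ Icc (-B₂) B₂) with hK
  have hKc : IsCompact K := isCompact_Icc.prod (isCompact_Icc.prod isCompact_Icc)
  have hsub : K ⊆ Icc (0:ℝ) 1 ×ˢ (univ : Set (ℝ × ℝ)) := fun q hq => ⟨hq.1, trivial⟩
  obtain ⟨C, hC⟩ := hKc.exists_bound_of_continuousOn (hf.mono hsub)
  refine ⟨C, fun s hs => ?_⟩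
  have hmem : ((s, φ₁ s, φ₂ s) : ℝ × ℝ × ℝ) ∈ K :=
    ⟨hs, ⟨abs_le.mp (hB₁ s hs), abs_le.mp (hB₂ s hs)⟩⟩
  simpa [Real.norm_eq_abs] using hC _ hmem

lemma ham_integrable (G : ℝ → ℝ → ℝ) (p : ℝ → ℝ) (f : ℝ → ℝ → ℝ → ℝ) (x : ℝ)
    (hInt : IntegrableOn (fun s => G x s * p s) (Icc (0:ℝ) 1))
    (hf : ContinuousOn (fun q : ℝ × ℝ × ℝ => f q.1 q.2.1 q.2.2)
      (Icc (0:ℝ) 1 ×ˢ (univ : Set (ℝ × ℝ))))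
    (φ₁ φ₂ : ℝ → ℝ)
    (h1 : Measurable ((Icc (0:ℝ) 1).restrict φ₁))
    (h2 : Measurable ((Icc (0:ℝ) 1).restrict φ₂))
    (hb₁ : ∃ C, ∀ x ∈ Icc (0:ℝ) 1, |φ₁ x| ≤ C)
    (hb₂ : ∃ C, ∀ x ∈ Icc (0:ℝ) 1, |φ₂ x| ≤ C) :
    IntegrableOn (fun s => G x s * p s * f s (φ₁ s) (φ₂ s)) (Icc (0:ℝ) 1) := by
  obtain ⟨C, hC⟩ := ham_bound f hf φ₁ φ₂ hb₁ hb₂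
  apply Integrable.mono' (hInt.abs.mul_const C)
  · exact hInt.aestronglyMeasurable.mul (ham_aesm f hf φ₁ φ₂ h1 h2)
  · filter_upwards [ae_restrict_mem measurableSet_Icc] with s hs
    rw [Real.norm_eq_abs, abs_mul]
    exact mul_le_mul_of_nonneg_left (hC s hs) (abs_nonneg _)

lemma ham_key (G : ℝ → ℝ → ℝ) (p : ℝ → ℝ) (f : ℝ → ℝ → ℝ → ℝ)
    (α c l₁ l₂ L M D : ℝ) (φ₁ φ₂ ψ₁ ψ₂ φi ψi : ℝ → ℝ) (x : ℝ) (hx : x ∈ Icc (0:ℝ) 1)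
    (hInt : IntegrableOn (fun s => G x s * p s) (Icc (0:ℝ) 1))
    (hM : (∫ s in Icc (0:ℝ) 1, |G x s * p s|) ≤ M)
    (hf : ContinuousOn (fun q : ℝ × ℝ × ℝ => f q.1 q.2.1 q.2.2)
      (Icc (0:ℝ) 1 ×ˢ (univ : Set (ℝ × ℝ))))
    (hLip : ∀ x ∈ Icc (0:ℝ) 1, ∀ z w z' w' : ℝ,
      |f x z w - f x z' w'| ≤ l₁ * |z - z'| + l₂ * |w - w'|)
    (hl₁ : l₁ ≤ L) (hl₂ : l₂ ≤ L) (hL0 : 0 ≤ L) (hD0 : 0 ≤ D)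
    (hφ₁m : Measurable ((Icc (0:ℝ) 1).restrict φ₁))
    (hφ₂m : Measurable ((Icc (0:ℝ) 1).restrict φ₂))
    (hψ₁m : Measurable ((Icc (0:ℝ) 1).restrict ψ₁))
    (hψ₂m : Measurable ((Icc (0:ℝ) 1).restrict ψ₂))
    (hφ₁b : ∃ C, ∀ x ∈ Icc (0:ℝ) 1, |φ₁ x| ≤ C)
    (hφ₂b : ∃ C, ∀ x ∈ Icc (0:ℝ) 1, |φ₂ x| ≤ C)
    (hψ₁b : ∃ C, ∀ x ∈ Icc (0:ℝ) 1, |ψ₁ x| ≤ C)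
    (hψ₂b : ∃ C, ∀ x ∈ Icc (0:ℝ) 1, |ψ₂ x| ≤ C)
    (hD1 : ∀ s ∈ Icc (0:ℝ) 1, |φ₁ s - ψ₁ s| ≤ D)
    (hD2 : ∀ s ∈ Icc (0:ℝ) 1, |φ₂ s - ψ₂ s| ≤ D)
    (hDi : |φi x - ψi x| ≤ D) :
    |(φi x + c * hamN G p f α φi φ₁ φ₂ x) - (ψi x + c * hamN G p f α ψi ψ₁ ψ₂ x)|
      ≤ |1 + c| * D + |c| * (2 * L * M * D) := by
  have hIφ := ham_integrable G p f x hInt hf φ₁ φ₂ hφ₁m hφ₂m hφ₁b hφ₂b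
  have hIψ := ham_integrable G p f x hInt hf ψ₁ ψ₂ hψ₁m hψ₂m hψ₁b hψ₂b
  have hsub : (∫ s in Icc (0:ℝ) 1, G x s * p s * f s (φ₁ s) (φ₂ s))
      - (∫ s in Icc (0:ℝ) 1, G x s * p s * f s (ψ₁ s) (ψ₂ s))
      = ∫ s in Icc (0:ℝ) 1, G x s * p s * (f s (φ₁ s) (φ₂ s) - f s (ψ₁ s) (ψ₂ s)) := by
    rw [← integral_sub hIφ hIψ]
    congr 1; funext s; ring
  have hLD0 : 0 ≤ 2 * L * D := by positivity
  have hbound : |∫ s in Icc (0:ℝ) 1,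
      G x s * p s * (f s (φ₁ s) (φ₂ s) - f s (ψ₁ s) (ψ₂ s))| ≤ 2 * L * M * D := by
    have key : ‖∫ s in Icc (0:ℝ) 1,
        G x s * p s * (f s (φ₁ s) (φ₂ s) - f s (ψ₁ s) (ψ₂ s))‖
        ≤ ∫ s in Icc (0:ℝ) 1, |G x s * p s| * (2 * L * D) := by
      apply norm_integral_le_of_norm_le (hInt.abs.mul_const _)
      filter_upwards [ae_restrict_mem measurableSet_Icc] with s hs
      rw [Real.norm_eq_abs, abs_mul]
      apply mul_le_mul_of_nonneg_left _ (abs_nonneg _)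
      calc |f s (φ₁ s) (φ₂ s) - f s (ψ₁ s) (ψ₂ s)|
          ≤ l₁ * |φ₁ s - ψ₁ s| + l₂ * |φ₂ s - ψ₂ s| := hLip s hs _ _ _ _
        _ ≤ L * D + L * D := add_le_add
            (le_trans (mul_le_mul_of_nonneg_right hl₁ (abs_nonneg _))
              (mul_le_mul_of_nonneg_left (hD1 s hs) hL0))
            (le_trans (mul_le_mul_of_nonneg_right hl₂ (abs_nonneg _))
              (mul_le_mul_of_nonneg_left (hD2 s hs) hL0))
        _ = 2 * L * D := by ring
    rw [Real.norm_eq_abs] at key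
    calc |∫ s in Icc (0:ℝ) 1, G x s * p s * (f s (φ₁ s) (φ₂ s) - f s (ψ₁ s) (ψ₂ s))|
        ≤ ∫ s in Icc (0:ℝ) 1, |G x s * p s| * (2 * L * D) := key
      _ = (∫ s in Icc (0:ℝ) 1, |G x s * p s|) * (2 * L * D) := integral_mul_const _ _
      _ ≤ M * (2 * L * D) := mul_le_mul_of_nonneg_right hM hLD0
      _ = 2 * L * M * D := by ring
  have hE : (φi x + c * hamN G p f α φi φ₁ φ₂ x) - (ψi x + c * hamN G p f α ψi ψ₁ ψ₂ x)
      = (1 + c) * (φi x - ψi x)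
        - c * ((∫ s in Icc (0:ℝ) 1, G x s * p s * f s (φ₁ s) (φ₂ s))
          - (∫ s in Icc (0:ℝ) 1, G x s * p s * f s (ψ₁ s) (ψ₂ s))) := by
    simp only [hamN]; ring
  rw [hE, hsub]
  calc |(1 + c) * (φi x - ψi x) - c * ∫ s in Icc (0:ℝ) 1,
        G x s * p s * (f s (φ₁ s) (φ₂ s) - f s (ψ₁ s) (ψ₂ s))|
      ≤ |(1 + c) * (φi x - ψi x)| + |c * ∫ s in Icc (0:ℝ) 1,
        G x s * p s * (f s (φ₁ s) (φ₂ s) - f s (ψ₁ s) (ψ₂ s))| := abs_sub _ _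
    _ ≤ |1 + c| * D + |c| * (2 * L * M * D) := by
        rw [abs_mul, abs_mul]
        exact add_le_add (mul_le_mul_of_nonneg_left hDi (abs_nonneg _))
          (mul_le_mul_of_nonneg_left hbound (abs_nonneg _))
theorem stmt0 (G₁ G₂ : ℝ → ℝ → ℝ) (p₁ p₂ : ℝ → ℝ) (f₁ f₂ : ℝ → ℝ → ℝ → ℝ)
    (l₁ l₂ L M α₁ α₂ c₁₀ c₂₀ δ : ℝ)
    (hInt₁ : ∀ x ∈ Icc (0:ℝ) 1, IntegrableOn (fun s => G₁ x s * p₁ s) (Icc (0:ℝ) 1))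
    (hInt₂ : ∀ x ∈ Icc (0:ℝ) 1, IntegrableOn (fun s => G₂ x s * p₂ s) (Icc (0:ℝ) 1))
    (hM0 : 0 ≤ M)
    (hM₁ : ∀ x ∈ Icc (0:ℝ) 1, (∫ s in Icc (0:ℝ) 1, |G₁ x s * p₁ s|) ≤ M)
    (hM₂ : ∀ x ∈ Icc (0:ℝ) 1, (∫ s in Icc (0:ℝ) 1, |G₂ x s * p₂ s|) ≤ M)
    (hf₁c : ContinuousOn (fun q : ℝ × ℝ × ℝ => f₁ q.1 q.2.1 q.2.2)
      (Icc (0:ℝ) 1 ×ˢ (univ : Set (ℝ × ℝ))))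
    (hf₂c : ContinuousOn (fun q : ℝ × ℝ × ℝ => f₂ q.1 q.2.1 q.2.2)
      (Icc (0:ℝ) 1 ×ˢ (univ : Set (ℝ × ℝ))))
    (hLip₁ : ∀ x ∈ Icc (0:ℝ) 1, ∀ z w z' w' : ℝ,
      |f₁ x z w - f₁ x z' w'| ≤ l₁ * |z - z'| + l₂ * |w - w'|)
    (hLip₂ : ∀ x ∈ Icc (0:ℝ) 1, ∀ z w z' w' : ℝ,
      |f₂ x z w - f₂ x z' w'| ≤ l₁ * |z - z'| + l₂ * |w - w'|)
    (hL : L = max l₁ l₂) (hc₁ : c₁₀ ≠ 0) (hc₂ : c₂₀ ≠ 0)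
    (hδ : δ = max |1 + c₁₀| |1 + c₂₀| + 2 * L * M * max |c₁₀| |c₂₀|)
    (φ₁ φ₂ ψ₁ ψ₂ : ℝ → ℝ)
    (hφ₁m : Measurable ((Icc (0:ℝ) 1).restrict φ₁))
    (hφ₂m : Measurable ((Icc (0:ℝ) 1).restrict φ₂))
    (hψ₁m : Measurable ((Icc (0:ℝ) 1).restrict ψ₁))
    (hψ₂m : Measurable ((Icc (0:ℝ) 1).restrict ψ₂))
    (hφ₁b : ∃ C, ∀ x ∈ Icc (0:ℝ) 1, |φ₁ x| ≤ C)
    (hφ₂b : ∃ C, ∀ x ∈ Icc (0:ℝ) 1, |φ₂ x| ≤ C)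
    (hψ₁b : ∃ C, ∀ x ∈ Icc (0:ℝ) 1, |ψ₁ x| ≤ C)
    (hψ₂b : ∃ C, ∀ x ∈ Icc (0:ℝ) 1, |ψ₂ x| ≤ C) :
    hamNorm
      (fun x => (φ₁ x + c₁₀ * hamN G₁ p₁ f₁ α₁ φ₁ φ₁ φ₂ x)
        - (ψ₁ x + c₁₀ * hamN G₁ p₁ f₁ α₁ ψ₁ ψ₁ ψ₂ x))
      (fun x => (φ₂ x + c₂₀ * hamN G₂ p₂ f₂ α₂ φ₂ φ₁ φ₂ x)
        - (ψ₂ x + c₂₀ * hamN G₂ p₂ f₂ α₂ ψ₂ ψ₁ ψ₂ x))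
      ≤ δ * hamNorm (fun x => φ₁ x - ψ₁ x) (fun x => φ₂ x - ψ₂ x) := by
  have h0mem : (0:ℝ) ∈ Icc (0:ℝ) 1 := ⟨le_refl 0, zero_le_one⟩
  haveI : Nonempty (Icc (0:ℝ) 1) := ⟨⟨0, h0mem⟩⟩
  -- l₁, l₂ are nonnegative
  have hl₁0 : 0 ≤ l₁ := by
    have h := hLip₁ 0 h0mem 0 0 1 0
    have h0 := abs_nonneg (f₁ 0 0 0 - f₁ 0 1 0)
    simp only [sub_zero, zero_sub, abs_neg, abs_one, abs_zero] at h
    nlinarith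
  have hl₂0 : 0 ≤ l₂ := by
    have h := hLip₁ 0 h0mem 0 0 0 1
    have h0 := abs_nonneg (f₁ 0 0 0 - f₁ 0 0 1)
    simp only [sub_zero, zero_sub, abs_neg, abs_one, abs_zero] at h
    nlinarith
  have hL0 : 0 ≤ L := hL ▸ le_trans hl₁0 (le_max_left _ _)
  have hl₁L : l₁ ≤ L := hL ▸ le_max_left _ _
  have hl₂L : l₂ ≤ L := hL ▸ le_max_right _ _
  set D := hamNorm (fun x => φ₁ x - ψ₁ x) (fun x => φ₂ x - ψ₂ x) with hDdef
  obtain ⟨B₁, hB₁⟩ := hφ₁b; obtain ⟨B₂, hB₂⟩ := hφ₂b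
  obtain ⟨B₃, hB₃⟩ := hψ₁b; obtain ⟨B₄, hB₄⟩ := hψ₂b
  have hbdd : BddAbove (range fun x : Icc (0:ℝ) 1 =>
      max |φ₁ (x:ℝ) - ψ₁ (x:ℝ)| |φ₂ (x:ℝ) - ψ₂ (x:ℝ)|) := by
    refine ⟨max (B₁ + B₃) (B₂ + B₄), ?_⟩
    rintro _ ⟨x, rfl⟩
    exact max_le_max
      ((abs_sub _ _).trans (add_le_add (hB₁ x x.2) (hB₃ x x.2)))
      ((abs_sub _ _).trans (add_le_add (hB₂ x x.2) (hB₄ x x.2)))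
  have hD0 : 0 ≤ D :=
    Real.iSup_nonneg fun x => le_trans (abs_nonneg _) (le_max_left _ _)
  have hD1 : ∀ s ∈ Icc (0:ℝ) 1, |φ₁ s - ψ₁ s| ≤ D := fun s hs =>
    le_trans (le_max_left _ _) (le_ciSup hbdd ⟨s, hs⟩)
  have hD2 : ∀ s ∈ Icc (0:ℝ) 1, |φ₂ s - ψ₂ s| ≤ D := fun s hs =>
    le_trans (le_max_right _ _) (le_ciSup hbdd ⟨s, hs⟩)
  rw [hamNorm]
  apply ciSup_le
  intro x
  have hLMD0 : 0 ≤ 2 * L * M * D := by positivity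
  have hfin : ∀ c : ℝ, |1 + c| ≤ max |1 + c₁₀| |1 + c₂₀| → |c| ≤ max |c₁₀| |c₂₀| →
      |1 + c| * D + |c| * (2 * L * M * D) ≤ δ * D := by
    intro c h1 h2
    rw [hδ]
    have e1 : |1 + c| * D ≤ max |1 + c₁₀| |1 + c₂₀| * D :=
      mul_le_mul_of_nonneg_right h1 hD0
    have e2 : |c| * (2 * L * M * D) ≤ max |c₁₀| |c₂₀| * (2 * L * M * D) :=
      mul_le_mul_of_nonneg_right h2 hLMD0
    nlinarith
  apply max_le
  · exact (ham_key G₁ p₁ f₁ α₁ c₁₀ l₁ l₂ L M D φ₁ φ₂ ψ₁ ψ₂ φ₁ ψ₁ x x.2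
      (hInt₁ x x.2) (hM₁ x x.2) hf₁c hLip₁ hl₁L hl₂L hL0 hD0
      hφ₁m hφ₂m hψ₁m hψ₂m ⟨B₁, hB₁⟩ ⟨B₂, hB₂⟩ ⟨B₃, hB₃⟩ ⟨B₄, hB₄⟩
      hD1 hD2 (hD1 x x.2)).trans
      (hfin c₁₀ (le_max_left _ _) (le_max_left _ _))
  · exact (ham_key G₂ p₂ f₂ α₂ c₂₀ l₁ l₂ L M D φ₁ φ₂ ψ₁ ψ₂ φ₂ ψ₂ x x.2
      (hInt₂ x x.2) (hM₂ x x.2) hf₂c hLip₂ hl₁L hl₂L hL0 hD0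
      hφ₁m hφ₂m hψ₁m hψ₂m ⟨B₁, hB₁⟩ ⟨B₂, hB₂⟩ ⟨B₃, hB₃⟩ ⟨B₄, hB₄⟩
      hD1 hD2 (hD2 x x.2)).trans
      (hfin c₂₀ (le_max_right _ _) (le_max_right _ _))
end

section
/- (Green's function representation, shape factor $k\ne 1$.) Let $k\ge 0$ be a real number with $k\ne 1$, let $a,b,c$ be reals with $a\ne 0$, and let $F\colon[0,1]\to\mathbb{R}$ be continuous. Define $G(x,s)=\dfrac{\max(x,s)^{1-k}-1}{1-k}-\dfrac{b}{a}$ and $y(x)=\dfrac{c}{a}+\int_0^1 G(x,s)\,s^{k}F(s)\,ds$ for $x\in[0,1]$. Then: (i) $y$ is differentiable on $(0,1]$ with $y'(x)=x^{-k}\int_0^x s^{k}F(s)\,ds$; (ii) the function $x\mapsto x^{k}y'(x)$ is differentiable on $(0,1)$ with $\dfrac{d}{dx}\big(x^{k}y'(x)\big)=x^{k}F(x)$ for all $x\in(0,1)$; (iii) $\lim_{x\to 0^+}y'(x)=0$; and (iv) $a\,y(1)+b\,y'(1)=c$. -/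
open MeasureTheory Set Filter Topology

lemma ftc_within9 (f : ℝ → ℝ) (hf : ContinuousOn f (Icc 0 1)) {x : ℝ} (hx : x ∈ Ioc (0:ℝ) 1) :
    HasDerivWithinAt (fun u => ∫ s in (0:ℝ)..u, f s) (f x) (Icc 0 1) x := by
  have hmemIcc : x ∈ Icc (0:ℝ) 1 := ⟨hx.1.le, hx.2⟩
  have hii : IntervalIntegrable f volume 0 x :=
    ContinuousOn.intervalIntegrable
      (by rw [uIcc_of_le hx.1.le]; exact hf.mono (Icc_subset_Icc_right hx.2))
  rcases eq_or_lt_of_le hx.2 with rfl | hlt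
  · have hmem : Icc (0:ℝ) 1 ∈ 𝓝[Iic 1] (1:ℝ) := by
      rw [← nhdsWithin_Icc_eq_nhdsLE zero_lt_one]; exact self_mem_nhdsWithin
    have hmeas : StronglyMeasurableAtFilter f (𝓝[Iic 1] (1:ℝ)) volume :=
      ⟨Icc 0 1, hmem, hf.aestronglyMeasurable measurableSet_Icc⟩
    have hcw : ContinuousWithinAt f (Iic 1) 1 := (hf 1 hmemIcc).mono_of_mem_nhdsWithin hmem
    exact (intervalIntegral.integral_hasDerivWithinAt_right hii hmeas hcw).mono Icc_subset_Iic_self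
  · have hnx : Icc (0:ℝ) 1 ∈ 𝓝 x := Icc_mem_nhds hx.1 hlt
    exact (intervalIntegral.integral_hasDerivAt_right hii
      ⟨Icc 0 1, hnx, hf.aestronglyMeasurable measurableSet_Icc⟩
      (hf.continuousAt hnx)).hasDerivWithinAt

theorem stmt9 (k a b c : ℝ) (hk : 0 ≤ k) (hk1 : k ≠ 1) (ha : a ≠ 0)
    (F : ℝ → ℝ) (hF : ContinuousOn F (Icc 0 1)) :
    let G : ℝ → ℝ → ℝ := fun x s => ((max x s) ^ (1 - k) - 1) / (1 - k) - b / a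
    let y : ℝ → ℝ := fun x => c / a + ∫ s in Icc (0:ℝ) 1, G x s * s ^ k * F s
    let d : ℝ → ℝ := fun x => x ^ (-k) * ∫ s in Icc (0:ℝ) x, s ^ k * F s
    (∀ x ∈ Ioc (0:ℝ) 1, HasDerivWithinAt y (d x) (Icc (0:ℝ) 1) x) ∧
    (∀ x ∈ Ioo (0:ℝ) 1, HasDerivAt (fun t => t ^ k * d t) (x ^ k * F x) x) ∧
    Tendsto d (nhdsWithin 0 (Ioi 0)) (nhds 0) ∧
    a * y 1 + b * d 1 = c := by
  intro G y d
  have hk1' : (1:ℝ) - k ≠ 0 := sub_ne_zero.mpr (Ne.symm hk1)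
  have hrpow : Continuous fun s : ℝ => s ^ k :=
    continuous_iff_continuousAt.mpr fun x => Real.continuousAt_rpow_const x k (Or.inr hk)
  set g : ℝ → ℝ := fun s => s ^ k * F s with hg_def
  set h : ℝ → ℝ := fun s => (s - s ^ k) / (1 - k) * F s with hh_def
  have hgc : ContinuousOn g (Icc 0 1) := hrpow.continuousOn.mul hF
  have hhc : ContinuousOn h (Icc 0 1) :=
    (((continuous_id.sub hrpow).continuousOn).div_const _).mul hF
  have key : ∀ s : ℝ, 0 < s → (s ^ (1-k) - 1) / (1-k) * s ^ k = (s - s ^ k) / (1-k) := by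
    intro s hs
    rw [div_mul_eq_mul_div, sub_mul, ← Real.rpow_add hs, sub_add_cancel, Real.rpow_one, one_mul]
  have hgInt : IntegrableOn g (Icc 0 1) volume := hgc.integrableOn_Icc
  have hhInt : IntegrableOn h (Icc 0 1) volume := hhc.integrableOn_Icc
  set A : ℝ := ∫ s in Icc (0:ℝ) 1, g s with hA_def
  set B : ℝ := ∫ s in (0:ℝ)..1, h s with hB_def
  set φ : ℝ → ℝ := fun t => (t ^ (1-k) - 1) / (1-k) with hφ_def
  set Y : ℝ → ℝ := fun t =>
    (c/a - b/a * A + B) + φ t * (∫ s in (0:ℝ)..t, g s) - ∫ s in (0:ℝ)..t, h s with hY_def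
  have h01 : IntervalIntegrable h volume 0 1 :=
    ContinuousOn.intervalIntegrable (by rwa [uIcc_of_le zero_le_one])
  -- y = Y on Icc 0 1
  have hyY : ∀ t ∈ Icc (0:ℝ) 1, y t = Y t := by
    intro t ht
    obtain ⟨ht0, ht1⟩ := ht
    have hsub1 : Icc (0:ℝ) t ⊆ Icc 0 1 := Icc_subset_Icc_right ht1
    have hsub2 : Ioc t (1:ℝ) ⊆ Icc 0 1 := Ioc_subset_Icc_self.trans (Icc_subset_Icc_left ht0)
    have hdisj : Disjoint (Icc (0:ℝ) t) (Ioc t 1) :=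
      disjoint_left.mpr fun s hs hs' => absurd hs.2 (not_le.mpr hs'.1)
    have heq1 : EqOn (fun s => (φ t - b/a) * g s) (fun s => G t s * s ^ k * F s) (Icc 0 t) := by
      intro s hs
      simp only [G, g, φ, max_eq_left hs.2]
      ring
    have heq2 : EqOn (fun s => h s - b/a * g s) (fun s => G t s * s ^ k * F s) (Ioc t 1) := by
      intro s hs
      have hs0 : 0 < s := lt_of_le_of_lt ht0 hs.1
      simp only [G, g, h, max_eq_right hs.1.le]
      rw [sub_mul, key s hs0]
      ring
    have hI1 : IntegrableOn (fun s => G t s * s ^ k * F s) (Icc 0 t) volume :=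
      MeasureTheory.IntegrableOn.congr_fun
        ((hgInt.mono_set hsub1).const_mul (φ t - b/a)) heq1 measurableSet_Icc
    have hI2 : IntegrableOn (fun s => G t s * s ^ k * F s) (Ioc t 1) volume :=
      MeasureTheory.IntegrableOn.congr_fun
        ((hhInt.mono_set hsub2).sub ((hgInt.mono_set hsub2).const_mul (b/a))) heq2
        measurableSet_Ioc
    have hsplit : ∫ s in Icc (0:ℝ) 1, G t s * s ^ k * F s =
        (∫ s in Icc (0:ℝ) t, G t s * s ^ k * F s) + ∫ s in Ioc t (1:ℝ), G t s * s ^ k * F s := by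
      rw [← Icc_union_Ioc_eq_Icc ht0 ht1]
      exact setIntegral_union hdisj measurableSet_Ioc hI1 hI2
    have hsplitg : A = (∫ s in Icc (0:ℝ) t, g s) + ∫ s in Ioc t (1:ℝ), g s := by
      rw [hA_def, ← Icc_union_Ioc_eq_Icc ht0 ht1]
      exact setIntegral_union hdisj measurableSet_Ioc (hgInt.mono_set hsub1) (hgInt.mono_set hsub2)
    have e1 : ∫ s in Icc (0:ℝ) t, G t s * s ^ k * F s = (φ t - b/a) * ∫ s in Icc (0:ℝ) t, g s := by
      rw [← setIntegral_congr_fun measurableSet_Icc heq1, integral_const_mul]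
    have e2 : ∫ s in Ioc t (1:ℝ), G t s * s ^ k * F s =
        (∫ s in Ioc t (1:ℝ), h s) - b/a * ∫ s in Ioc t (1:ℝ), g s := by
      rw [← setIntegral_congr_fun measurableSet_Ioc heq2,
        integral_sub (hhInt.mono_set hsub2) ((hgInt.mono_set hsub2).const_mul (b/a)),
        integral_const_mul]
    have hIt : ∫ s in Icc (0:ℝ) t, g s = ∫ s in (0:ℝ)..t, g s := by
      rw [integral_Icc_eq_integral_Ioc, intervalIntegral.integral_of_le ht0]
    have h0t : IntervalIntegrable h volume 0 t :=
      ContinuousOn.intervalIntegrable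
        (by rw [uIcc_of_le ht0]; exact hhc.mono (Icc_subset_Icc_right ht1))
    have hJt : ∫ s in Ioc t (1:ℝ), h s = B - ∫ s in (0:ℝ)..t, h s := by
      rw [← intervalIntegral.integral_of_le ht1, hB_def,
        intervalIntegral.integral_interval_sub_left h01 h0t]
    simp only [y, Y]
    rw [hsplit, e1, e2, hIt, hJt]
    have hgsplit : ∫ s in Ioc t (1:ℝ), g s = A - ∫ s in (0:ℝ)..t, g s := by
      rw [hsplitg, hIt]; ring
    rw [hgsplit]
    ring
  obtain ⟨M, hM⟩ := isCompact_Icc.exists_bound_of_continuousOn hF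
  refine ⟨?_, ?_, ?_, ?_⟩
  -- (i)
  · intro x hx
    obtain ⟨hx0, hx1⟩ := hx
    have hφd : HasDerivAt φ (x ^ (-k)) x := by
      have h1 : HasDerivAt (fun t : ℝ => t ^ (1-k)) ((1-k) * x ^ (1-k-1)) x :=
        Real.hasDerivAt_rpow_const (Or.inl hx0.ne')
      have h2 := (h1.sub_const 1).div_const (1-k)
      refine h2.congr_deriv ?_
      rw [show (1:ℝ) - k - 1 = -k by ring]
      field_simp
    have hxIcc : x ∈ Icc (0:ℝ) 1 := ⟨hx0.le, hx1⟩
    have FTCg := ftc_within9 g hgc ⟨hx0, hx1⟩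
    have FTCh := ftc_within9 h hhc ⟨hx0, hx1⟩
    have hY : HasDerivWithinAt Y
        (0 + (x ^ (-k) * (∫ s in (0:ℝ)..x, g s) + φ x * g x) - h x) (Icc 0 1) x :=
      ((hasDerivWithinAt_const x _ (c/a - b/a * A + B)).add
        (hφd.hasDerivWithinAt.mul FTCg)).sub FTCh
    have hφg : φ x * g x = h x := by
      simp only [φ, g, h]
      rw [← mul_assoc, key x hx0]
    have hP : (∫ s in (0:ℝ)..x, g s) = ∫ s in Icc (0:ℝ) x, s ^ k * F s := by
      rw [integral_Icc_eq_integral_Ioc, ← intervalIntegral.integral_of_le hx0.le]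
    have hDval : 0 + (x ^ (-k) * (∫ s in (0:ℝ)..x, g s) + φ x * g x) - h x = d x := by
      simp only [d]
      rw [hφg, hP]
      ring
    have hfin := hY.congr hyY (hyY x hxIcc)
    rwa [hDval] at hfin
  -- (ii)
  · intro x hx
    obtain ⟨hx0, hx1⟩ := hx
    have hnx : Icc (0:ℝ) 1 ∈ 𝓝 x := Icc_mem_nhds hx0 hx1
    have hii : IntervalIntegrable g volume 0 x :=
      ContinuousOn.intervalIntegrable
        (by rw [uIcc_of_le hx0.le]; exact hgc.mono (Icc_subset_Icc_right hx1.le))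
    have hD : HasDerivAt (fun u => ∫ s in (0:ℝ)..u, g s) (g x) x :=
      intervalIntegral.integral_hasDerivAt_right hii
        ⟨Icc 0 1, hnx, hgc.aestronglyMeasurable measurableSet_Icc⟩ (hgc.continuousAt hnx)
    have hEq : (fun t => t ^ k * d t) =ᶠ[𝓝 x] fun u => ∫ s in (0:ℝ)..u, g s := by
      filter_upwards [Ioi_mem_nhds hx0] with t ht
      simp only [d]
      rw [integral_Icc_eq_integral_Ioc, ← intervalIntegral.integral_of_le (le_of_lt ht),
        ← mul_assoc, ← Real.rpow_add ht, add_neg_cancel, Real.rpow_zero, one_mul]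
    exact hD.congr_of_eventuallyEq hEq
  -- (iii)
  · have hM0 : 0 ≤ M := le_trans (norm_nonneg _) (hM 0 ⟨le_refl 0, zero_le_one⟩)
    have htend : Tendsto (fun t : ℝ => M * t) (𝓝[>] (0:ℝ)) (𝓝 0) := by
      have : Tendsto (fun t : ℝ => M * t) (𝓝 0) (𝓝 (M * 0)) :=
        (continuous_const.mul continuous_id).tendsto 0
      rw [mul_zero] at this
      exact this.mono_left nhdsWithin_le_nhds
    refine squeeze_zero_norm' ?_ htend
    · filter_upwards [Ioc_mem_nhdsGT_of_mem ⟨le_refl (0:ℝ), zero_lt_one⟩] with t ht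
      obtain ⟨ht0, ht1⟩ := ht
      have hbound : ‖∫ s in Icc (0:ℝ) t, g s‖ ≤ t ^ k * M * t := by
        have h1 : ‖∫ s in Icc (0:ℝ) t, g s‖ ≤ (t ^ k * M) * (volume (Icc (0:ℝ) t)).toReal := by
          apply norm_setIntegral_le_of_norm_le_const
          · rw [Real.volume_Icc]; exact ENNReal.ofReal_lt_top
          · intro s hs
            have hs1 : s ∈ Icc (0:ℝ) 1 := ⟨hs.1, le_trans hs.2 ht1⟩
            have : ‖g s‖ = s ^ k * ‖F s‖ := by
              rw [norm_mul, Real.norm_eq_abs, abs_of_nonneg (Real.rpow_nonneg hs.1 k)]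
            rw [this]
            exact mul_le_mul (Real.rpow_le_rpow hs.1 hs.2 hk) (hM s hs1) (norm_nonneg _)
              (Real.rpow_nonneg ht0.le k)
        rwa [Real.volume_Icc, sub_zero, ENNReal.toReal_ofReal ht0.le] at h1
      have : ‖d t‖ = t ^ (-k) * ‖∫ s in Icc (0:ℝ) t, g s‖ := by
        simp only [d, norm_mul, Real.norm_eq_abs, abs_of_nonneg (Real.rpow_nonneg ht0.le (-k))]
        rfl
      rw [this]
      calc t ^ (-k) * ‖∫ s in Icc (0:ℝ) t, g s‖ ≤ t ^ (-k) * (t ^ k * M * t) :=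
            mul_le_mul_of_nonneg_left hbound (Real.rpow_nonneg ht0.le _)
        _ = M * t := by
            rw [← mul_assoc, ← mul_assoc, ← Real.rpow_add ht0, neg_add_cancel, Real.rpow_zero,
              one_mul]
  -- (iv)
  · have h1 : y 1 = c/a - b/a * A := by
      simp only [y]
      have : ∫ s in Icc (0:ℝ) 1, G 1 s * s ^ k * F s = ∫ s in Icc (0:ℝ) 1, -(b/a) * g s := by
        apply setIntegral_congr_fun measurableSet_Icc
        intro s hs
        simp only [G, g, max_eq_left hs.2, Real.one_rpow]
        ring
      rw [this, integral_const_mul, ← hA_def]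
      ring
    have h2 : d 1 = A := by
      simp only [d, Real.one_rpow, one_mul]
      rfl
    rw [h1, h2]
    field_simp
    ring
end

section
/- (Green's function representation, shape factor $k=1$.) Let $a,b,c$ be reals with $a\ne 0$ and let $F\colon[0,1]\to\mathbb{R}$ be continuous. Define $G(x,s)=\ln\big(\max(x,s)\big)-\dfrac{b}{a}$ and $y(x)=\dfrac{c}{a}+\int_0^1 G(x,s)\,s\,F(s)\,ds$ for $x\in[0,1]$. Then: (i) $y$ is differentiable on $(0,1]$ with $y'(x)=\dfrac{1}{x}\int_0^x s\,F(s)\,ds$; (ii) the function $x\mapsto x\,y'(x)$ is differentiable on $(0,1)$ with $\dfrac{d}{dx}\big(x\,y'(x)\big)=x\,F(x)$ for all $x\in(0,1)$; (iii) $\lim_{x\to 0^+}y'(x)=0$; and (iv) $a\,y(1)+b\,y'(1)=c$. -/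
open MeasureTheory Set Filter Topology

theorem stmt10 (a b c : ℝ) (ha : a ≠ 0)
    (F : ℝ → ℝ) (hF : ContinuousOn F (Icc 0 1)) :
    let G : ℝ → ℝ → ℝ := fun x s => Real.log (max x s) - b / a
    let y : ℝ → ℝ := fun x => c / a + ∫ s in Icc (0:ℝ) 1, G x s * s * F s
    let d : ℝ → ℝ := fun x => (1 / x) * ∫ s in Icc (0:ℝ) x, s * F s
    (∀ x ∈ Ioc (0:ℝ) 1, HasDerivWithinAt y (d x) (Icc (0:ℝ) 1) x) ∧
    (∀ x ∈ Ioo (0:ℝ) 1, HasDerivAt (fun t => t * d t) (x * F x) x) ∧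
    Tendsto d (nhdsWithin 0 (Ioi 0)) (nhds 0) ∧
    a * y 1 + b * d 1 = c := by
  intro G y d
  -- basic continuity / integrability of s ↦ s * F s
  have hcont : ContinuousOn (fun s => s * F s) (Icc (0:ℝ) 1) :=
    continuousOn_id.mul hF
  have hint01 : IntervalIntegrable (fun s => s * F s) volume 0 1 :=
    ContinuousOn.intervalIntegrable (by rwa [uIcc_of_le (by norm_num : (0:ℝ) ≤ 1)])
  set I : ℝ → ℝ := fun t => ∫ s in (0:ℝ)..t, s * F s with hIdef
  set J : ℝ → ℝ := fun t => ∫ s in t..(1:ℝ), Real.log s * (s * F s) with hJdef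
  -- conversion: Icc-integral equals interval integral for 0 ≤ t
  have hIcc : ∀ t : ℝ, 0 ≤ t → (∫ s in Icc (0:ℝ) t, s * F s) = I t := by
    intro t ht
    show _ = ∫ s in (0:ℝ)..t, s * F s
    rw [intervalIntegral.integral_of_le ht, integral_Icc_eq_integral_Ioc]
  -- identity for y on (0,1]
  have hkey : ∀ x ∈ Ioc (0:ℝ) 1,
      y x = c / a + Real.log x * I x + J x - b / a * I 1 := by
    intro x hx
    have hx0 : (0:ℝ) < x := hx.1
    have hx1 : x ≤ 1 := hx.2
    have hintg : IntervalIntegrable (fun s => (Real.log (max x s) - b / a) * s * F s)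
        volume 0 1 := by
      apply ContinuousOn.intervalIntegrable
      rw [uIcc_of_le (by norm_num : (0:ℝ) ≤ 1)]
      apply ContinuousOn.mul ?_ hF
      apply ContinuousOn.mul ?_ continuousOn_id
      apply ContinuousOn.sub ?_ continuousOn_const
      apply ContinuousOn.log ((continuous_const.max continuous_id).continuousOn)
      intro s hs
      exact ne_of_gt (lt_of_lt_of_le hx0 (le_max_left _ _))
    have h1 : IntervalIntegrable (fun s => (Real.log (max x s) - b / a) * s * F s)
        volume 0 x := hintg.mono_set (by
          rw [uIcc_of_le hx0.le, uIcc_of_le (by norm_num : (0:ℝ) ≤ 1)]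
          exact Icc_subset_Icc le_rfl hx1)
    have h2 : IntervalIntegrable (fun s => (Real.log (max x s) - b / a) * s * F s)
        volume x 1 := hintg.mono_set (by
          rw [uIcc_of_le hx1, uIcc_of_le (by norm_num : (0:ℝ) ≤ 1)]
          exact Icc_subset_Icc hx0.le le_rfl)
    have hsplit : (∫ s in Icc (0:ℝ) 1, (Real.log (max x s) - b / a) * s * F s)
        = (∫ s in (0:ℝ)..x, (Real.log (max x s) - b / a) * s * F s)
          + ∫ s in x..(1:ℝ), (Real.log (max x s) - b / a) * s * F s := by
      rw [integral_Icc_eq_integral_Ioc,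
        ← intervalIntegral.integral_of_le (by norm_num : (0:ℝ) ≤ 1),
        ← intervalIntegral.integral_add_adjacent_intervals h1 h2]
    have hA : (∫ s in (0:ℝ)..x, (Real.log (max x s) - b / a) * s * F s)
        = (Real.log x - b / a) * I x := by
      rw [show (Real.log x - b / a) * I x
          = ∫ s in (0:ℝ)..x, (Real.log x - b / a) * (s * F s) from
        (intervalIntegral.integral_const_mul _ _).symm]
      apply intervalIntegral.integral_congr
      intro s hs
      rw [uIcc_of_le hx0.le] at hs
      show (Real.log (max x s) - b / a) * s * F s = (Real.log x - b / a) * (s * F s)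
      rw [max_eq_left hs.2]
      ring
    have hIx1 : IntervalIntegrable (fun s => s * F s) volume x 1 :=
      hint01.mono_set (by
        rw [uIcc_of_le hx1, uIcc_of_le (by norm_num : (0:ℝ) ≤ 1)]
        exact Icc_subset_Icc hx0.le le_rfl)
    have hlogint : IntervalIntegrable (fun s => Real.log s * (s * F s)) volume x 1 := by
      apply ContinuousOn.intervalIntegrable
      rw [uIcc_of_le hx1]
      apply ContinuousOn.mul
      · exact Real.continuousOn_log.mono (fun s hs => ne_of_gt (lt_of_lt_of_le hx0 hs.1))
      · exact hcont.mono (Icc_subset_Icc hx0.le le_rfl)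
    have hB : (∫ s in x..(1:ℝ), (Real.log (max x s) - b / a) * s * F s)
        = J x - b / a * (I 1 - I x) := by
      have heq : (∫ s in x..(1:ℝ), (Real.log (max x s) - b / a) * s * F s)
          = ∫ s in x..(1:ℝ), (Real.log s * (s * F s) - b / a * (s * F s)) := by
        apply intervalIntegral.integral_congr
        intro s hs
        rw [uIcc_of_le hx1] at hs
        show (Real.log (max x s) - b / a) * s * F s
            = Real.log s * (s * F s) - b / a * (s * F s)
        rw [max_eq_right hs.1]
        ring
      rw [heq, intervalIntegral.integral_sub hlogint (hIx1.const_mul _),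
        intervalIntegral.integral_const_mul]
      have : (∫ s in x..(1:ℝ), s * F s) = I 1 - I x := by
        have := intervalIntegral.integral_add_adjacent_intervals
          (hint01.mono_set (by
            rw [uIcc_of_le hx0.le, uIcc_of_le (by norm_num : (0:ℝ) ≤ 1)]
            exact Icc_subset_Icc le_rfl hx1)) hIx1
        simp only [hIdef]
        linarith [this]
      rw [this]
    show c / a + (∫ s in Icc (0:ℝ) 1, (Real.log (max x s) - b / a) * s * F s)
        = c / a + Real.log x * I x + J x - b / a * I 1
    rw [hsplit, hA, hB]; ring
  -- the derivative of I within Icc 0 1 at points of (0,1]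
  have hIderiv : ∀ x ∈ Icc (0:ℝ) 1, HasDerivWithinAt I (x * F x) (Icc (0:ℝ) 1) x := by
    intro x hx
    haveI : Fact (x ∈ Icc (0:ℝ) 1) := ⟨hx⟩
    exact intervalIntegral.integral_hasDerivWithinAt_right
      (hint01.mono_set (by
        rw [uIcc_of_le (by norm_num : (0:ℝ) ≤ 1)]
        exact uIcc_subset_Icc ⟨le_refl 0, by norm_num⟩ hx))
      (hcont.stronglyMeasurableAtFilter_nhdsWithin measurableSet_Icc x)
      (hcont.continuousWithinAt hx)
  refine ⟨?_, ?_, ?_, ?_⟩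
  · -- (i)
    intro x hx
    have hx0 : (0:ℝ) < x := hx.1
    have hxm : x ∈ Icc (0:ℝ) 1 := ⟨hx0.le, hx.2⟩
    haveI : Fact (x ∈ Icc (0:ℝ) 1) := ⟨hxm⟩
    have hI := hIderiv x hxm
    -- derivative of J
    have hflog : ContinuousOn (fun s => Real.log s * (s * F s)) (Icc (x/2) 1) := by
      apply ContinuousOn.mul
      · exact Real.continuousOn_log.mono (fun s hs => ne_of_gt (lt_of_lt_of_le (by linarith) hs.1))
      · exact hcont.mono (Icc_subset_Icc (by linarith) le_rfl)
    have hmeasJ : StronglyMeasurableAtFilter (fun s => Real.log s * (s * F s))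
        (𝓝[Icc (0:ℝ) 1] x) volume := by
      refine ⟨Icc (0:ℝ) 1 ∩ Ioi (x/2), inter_mem_nhdsWithin _ (Ioi_mem_nhds (by linarith)), ?_⟩
      exact (hflog.mono (fun s hs => ⟨le_of_lt hs.2, hs.1.2⟩)).aestronglyMeasurable
        (measurableSet_Icc.inter measurableSet_Ioi)
    have hJint : IntervalIntegrable (fun s => Real.log s * (s * F s)) volume x 1 := by
      apply ContinuousOn.intervalIntegrable
      rw [uIcc_of_le hx.2]
      exact hflog.mono (Icc_subset_Icc (by linarith) le_rfl)
    have hJcont : ContinuousWithinAt (fun s => Real.log s * (s * F s)) (Icc (0:ℝ) 1) x := by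
      apply ContinuousWithinAt.mul
      · exact (Real.continuousAt_log hx0.ne').continuousWithinAt
      · exact hcont.continuousWithinAt hxm
    have hJ : HasDerivWithinAt J (-(Real.log x * (x * F x))) (Icc (0:ℝ) 1) x :=
      intervalIntegral.integral_hasDerivWithinAt_left hJint hmeasJ hJcont
    have hlog : HasDerivWithinAt Real.log x⁻¹ (Icc (0:ℝ) 1) x :=
      (Real.hasDerivAt_log hx0.ne').hasDerivWithinAt
    have hy2 : HasDerivWithinAt (fun u => c / a + Real.log u * I u + J u - b / a * I 1)
        (d x) (Icc (0:ℝ) 1) x := by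
      have := ((((hlog.mul hI).const_add (c / a)).add hJ).sub_const (b / a * I 1))
      convert this using 1
      have hIccx := hIcc x hx0.le
      show (1 / x) * (∫ s in Icc (0:ℝ) x, s * F s) = _
      rw [hIcc x hx0.le]
      field_simp
      ring
      all_goals rfl
    apply hy2.congr_of_eventuallyEq ?_ (hkey x hx)
    exact Filter.eventuallyEq_of_mem
      (inter_mem_nhdsWithin _ (Ioi_mem_nhds hx0) :
        Icc (0:ℝ) 1 ∩ Ioi 0 ∈ 𝓝[Icc (0:ℝ) 1] x)
      (fun t ht => hkey t ⟨ht.2, ht.1.2⟩)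
  · -- (ii)
    intro x hx
    have hxm : x ∈ Icc (0:ℝ) 1 := ⟨hx.1.le, hx.2.le⟩
    have hI : HasDerivAt I (x * F x) x :=
      (hIderiv x hxm).hasDerivAt (Icc_mem_nhds hx.1 hx.2)
    apply hI.congr_of_eventuallyEq
    apply Filter.eventuallyEq_of_mem (isOpen_Ioo.mem_nhds hx : Ioo (0:ℝ) 1 ∈ 𝓝 x)
    intro t ht
    show t * ((1 / t) * ∫ s in Icc (0:ℝ) t, s * F s) = I t
    rw [hIcc t ht.1.le]
    field_simp [ht.1.ne']
  · -- (iii)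
    obtain ⟨M, hM⟩ := (isCompact_Icc (a := (0:ℝ)) (b := 1)).exists_bound_of_continuousOn hF
    refine squeeze_zero_norm' (a := fun x => M * x) ?_ ?_
    · have hmem : Ioc (0:ℝ) 1 ∈ 𝓝[>] (0:ℝ) :=
        inter_mem self_mem_nhdsWithin
          (nhdsWithin_le_nhds (Iic_mem_nhds (by norm_num)))
      filter_upwards [hmem] with x hx
      have hx0 : (0:ℝ) < x := hx.1
      have hbound : ‖∫ s in Icc (0:ℝ) x, s * F s‖ ≤ (M * x) * (volume (Icc (0:ℝ) x)).toReal := by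
        apply norm_setIntegral_le_of_norm_le_const (by simp)
        intro s hs
        have hs1 : s ∈ Icc (0:ℝ) 1 := ⟨hs.1, le_trans hs.2 hx.2⟩
        have h1 : ‖s * F s‖ = s * ‖F s‖ := by
          rw [norm_mul, Real.norm_of_nonneg hs.1]
        rw [h1]
        have hFs := hM s hs1
        have hM0 : 0 ≤ M := le_trans (norm_nonneg _) hFs
        calc s * ‖F s‖ ≤ x * M := by
              apply mul_le_mul hs.2 hFs (norm_nonneg _) hx0.le
          _ = M * x := by ring
      rw [Real.volume_Icc] at hbound
      have hvol : (ENNReal.ofReal (x - 0)).toReal = x := by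
        rw [ENNReal.toReal_ofReal (by linarith)]; ring
      rw [hvol] at hbound
      have : ‖d x‖ = (1 / x) * ‖∫ s in Icc (0:ℝ) x, s * F s‖ := by
        show ‖(1 / x) * _‖ = _
        rw [norm_mul, Real.norm_of_nonneg (by positivity)]
      rw [this]
      calc (1 / x) * ‖∫ s in Icc (0:ℝ) x, s * F s‖ ≤ (1 / x) * ((M * x) * x) := by
            apply mul_le_mul_of_nonneg_left hbound (by positivity)
        _ = M * x := by field_simp
    · have h : Tendsto (fun x : ℝ => M * x) (𝓝 0) (𝓝 0) := by
        have h2 : Continuous (fun x : ℝ => M * x) := continuous_const.mul continuous_id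
        simpa using h2.tendsto (0:ℝ)
      exact h.mono_left nhdsWithin_le_nhds
  · -- (iv)
    have hy1 : y 1 = c / a - b / a * ∫ s in Icc (0:ℝ) 1, s * F s := by
      show c / a + (∫ s in Icc (0:ℝ) 1, (Real.log (max 1 s) - b / a) * s * F s) = _
      have : (∫ s in Icc (0:ℝ) 1, (Real.log (max 1 s) - b / a) * s * F s)
          = ∫ s in Icc (0:ℝ) 1, (-(b / a)) * (s * F s) := by
        apply setIntegral_congr_fun measurableSet_Icc
        intro s hs
        show (Real.log (max 1 s) - b / a) * s * F s = -(b / a) * (s * F s)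
        rw [max_eq_left hs.2, Real.log_one]
        ring
      rw [this, integral_const_mul]
      ring
    have hd1 : d 1 = ∫ s in Icc (0:ℝ) 1, s * F s := by
      show (1 / 1) * _ = _
      ring
    rw [hy1, hd1]
    field_simp
    ring
end

section
/- (Integral form of the coupled Lane–Emden system.) Let $k_1,k_2\ge 0$ be real numbers with $k_1\ne 1$ and $k_2\ne 1$, let $a_1,a_2,b_1,b_2,c_1,c_2$ be reals with $a_1\ne0$, $a_2\ne0$, and let $f_1,f_2\colon[0,1]\times\mathbb{R}\times\mathbb{R}\to\mathbb{R}$ be continuous. Define $G_i(x,s)=\dfrac{\max(x,s)^{1-k_i}-1}{1-k_i}-\dfrac{b_i}{a_i}$ for $i=1,2$. Suppose $y_1,y_2\colon[0,1]\to\mathbb{R}$ are continuous and satisfy, for all $x\in[0,1]$, $y_i(x)=\dfrac{c_i}{a_i}+\int_0^1 G_i(x,s)\,s^{k_i}f_i\big(s,y_1(s),y_2(s)\big)\,ds$ ($i=1,2$). Then for $i=1,2$: $y_i$ is differentiable on $(0,1]$ with $y_i'(x)=x^{-k_i}\int_0^x s^{k_i}f_i(s,y_1(s),y_2(s))\,ds$;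 $\dfrac{d}{dx}\big(x^{k_i}y_i'(x)\big)=x^{k_i}f_i\big(x,y_1(x),y_2(x)\big)$ for all $x\in(0,1)$; $\lim_{x\to0^+}y_i'(x)=0$; and $a_i\,y_i(1)+b_i\,y_i'(1)=c_i$. -/
open MeasureTheory Set Filter Topology

theorem laneEmden_aux (k a b c : ℝ) (hk : 0 ≤ k) (hk1 : k ≠ 1) (ha : a ≠ 0)
    (φ : ℝ → ℝ) (hφ : Continuous φ) (y : ℝ → ℝ)
    (heq : ∀ x ∈ Icc (0:ℝ) 1, y x = c / a + ∫ s in Icc (0:ℝ) 1,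
      (((max x s) ^ (1 - k) - 1) / (1 - k) - b / a) * s ^ k * φ s) :
    (∀ x ∈ Ioc (0:ℝ) 1, HasDerivWithinAt y
        (x ^ (-k) * ∫ s in Icc (0:ℝ) x, s ^ k * φ s) (Icc (0:ℝ) 1) x) ∧
    (∀ x ∈ Ioo (0:ℝ) 1, HasDerivAt
        (fun t => t ^ k * (t ^ (-k) * ∫ s in Icc (0:ℝ) t, s ^ k * φ s)) (x ^ k * φ x) x) ∧
    Tendsto (fun x => x ^ (-k) * ∫ s in Icc (0:ℝ) x, s ^ k * φ s) (𝓝[>] (0:ℝ)) (𝓝 0) ∧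
    a * y 1 + b * ((1:ℝ) ^ (-k) * ∫ s in Icc (0:ℝ) 1, s ^ k * φ s) = c := by
  have hk1' : (1:ℝ) - k ≠ 0 := sub_ne_zero.2 (Ne.symm hk1)
  have hpow : Continuous fun s : ℝ => s ^ k :=
    continuous_iff_continuousAt.2 fun x => Real.continuousAt_rpow_const x k (Or.inr hk)
  set g : ℝ → ℝ := fun s => s ^ k * φ s with hgdef
  have hgc : Continuous g := hpow.mul hφ
  set w : ℝ → ℝ := fun s => (s - s ^ k) / (1 - k) * φ s with hwdef
  have hwc : Continuous w := (((continuous_id.sub hpow).div_const _).mul hφ)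
  have hpowid : ∀ s : ℝ, 0 ≤ s → s ^ (1 - k) * s ^ k = s := by
    intro s hs
    rcases eq_or_lt_of_le hs with h | h
    · rcases eq_or_lt_of_le hk with hk0 | hk0
      · simp [← h, ← hk0]
      · rw [← h, Real.zero_rpow (ne_of_gt hk0), mul_zero]
    · rw [← Real.rpow_add h, sub_add_cancel, Real.rpow_one]
  have huw : ∀ s : ℝ, 0 ≤ s → (s ^ (1 - k) - 1) / (1 - k) * g s = w s := by
    intro s hs
    have h2 := hpowid s hs
    show (s ^ (1 - k) - 1) / (1 - k) * (s ^ k * φ s) = (s - s ^ k) / (1 - k) * φ s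
    field_simp
    linear_combination φ s * h2
  set G : ℝ → ℝ := fun t => ∫ s in (0:ℝ)..t, g s with hGdef
  set H : ℝ → ℝ := fun t => ∫ s in t..(1:ℝ), w s with hHdef
  have hGder : ∀ x : ℝ, HasDerivAt G (g x) x := fun x =>
    intervalIntegral.integral_hasDerivAt_right (hgc.intervalIntegrable _ _)
      (hgc.stronglyMeasurableAtFilter _ _) hgc.continuousAt
  have hHder : ∀ x : ℝ, HasDerivAt H (-(w x)) x := fun x =>
    intervalIntegral.integral_hasDerivAt_left (hwc.intervalIntegrable _ _)
      (hwc.stronglyMeasurableAtFilter _ _) hwc.continuousAt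
  have hIccG : ∀ x : ℝ, 0 ≤ x → (∫ s in Icc (0:ℝ) x, s ^ k * φ s) = G x := by
    intro x hx
    show (∫ s in Icc (0:ℝ) x, s ^ k * φ s) = ∫ s in (0:ℝ)..x, g s
    rw [MeasureTheory.integral_Icc_eq_integral_Ioc, intervalIntegral.integral_of_le hx]
  -- representation
  have hrep : ∀ x ∈ Icc (0:ℝ) 1, y x =
      (c / a - b / a * G 1) + ((x ^ (1 - k) - 1) / (1 - k) * G x + H x) := by
    intro x hx
    obtain ⟨hx0, hx1⟩ := hx
    have hleft : EqOn (fun s => (((max x s) ^ (1 - k) - 1) / (1 - k) - b / a) * s ^ k * φ s)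
        (fun s => ((x ^ (1 - k) - 1) / (1 - k) - b / a) * g s) (uIcc 0 x) := by
      intro s hs
      rw [uIcc_of_le hx0] at hs
      have hms : max x s = x := max_eq_left hs.2
      show (((max x s) ^ (1 - k) - 1) / (1 - k) - b / a) * s ^ k * φ s
          = ((x ^ (1 - k) - 1) / (1 - k) - b / a) * (s ^ k * φ s)
      rw [hms]; ring
    have hright : EqOn (fun s => (((max x s) ^ (1 - k) - 1) / (1 - k) - b / a) * s ^ k * φ s)
        (fun s => w s - b / a * g s) (uIcc x 1) := by
      intro s hs
      rw [uIcc_of_le hx1] at hs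
      have hms : max x s = s := max_eq_right hs.1
      have hs0 : (0:ℝ) ≤ s := le_trans hx0 hs.1
      show (((max x s) ^ (1 - k) - 1) / (1 - k) - b / a) * s ^ k * φ s = w s - b / a * g s
      rw [hms, ← huw s hs0]
      show ((s ^ (1 - k) - 1) / (1 - k) - b / a) * s ^ k * φ s
          = (s ^ (1 - k) - 1) / (1 - k) * (s ^ k * φ s) - b / a * (s ^ k * φ s)
      ring
    have int1 : IntervalIntegrable
        (fun s => (((max x s) ^ (1 - k) - 1) / (1 - k) - b / a) * s ^ k * φ s) volume 0 x := by
      rw [intervalIntegrable_iff]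
      exact (intervalIntegrable_iff.mp
        (((continuous_const.mul hgc)).intervalIntegrable 0 x)).congr_fun
        (fun s hs => (hleft (uIoc_subset_uIcc hs)).symm) measurableSet_uIoc
    have int2 : IntervalIntegrable
        (fun s => (((max x s) ^ (1 - k) - 1) / (1 - k) - b / a) * s ^ k * φ s) volume x 1 := by
      rw [intervalIntegrable_iff]
      exact (intervalIntegrable_iff.mp
        ((hwc.sub (continuous_const.mul hgc)).intervalIntegrable x 1)).congr_fun
        (fun s hs => (hright (uIoc_subset_uIcc hs)).symm) measurableSet_uIoc
    have hsplit : (∫ s in (0:ℝ)..1, (((max x s) ^ (1 - k) - 1) / (1 - k) - b / a) * s ^ k * φ s)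
        = (∫ s in (0:ℝ)..x, (((max x s) ^ (1 - k) - 1) / (1 - k) - b / a) * s ^ k * φ s)
        + ∫ s in x..(1:ℝ), (((max x s) ^ (1 - k) - 1) / (1 - k) - b / a) * s ^ k * φ s :=
      (intervalIntegral.integral_add_adjacent_intervals int1 int2).symm
    have hL : (∫ s in (0:ℝ)..x, (((max x s) ^ (1 - k) - 1) / (1 - k) - b / a) * s ^ k * φ s)
        = ((x ^ (1 - k) - 1) / (1 - k) - b / a) * G x := by
      rw [intervalIntegral.integral_congr hleft, intervalIntegral.integral_const_mul]
    have hGx1 : (∫ s in x..(1:ℝ), g s) = G 1 - G x := by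
      have := intervalIntegral.integral_add_adjacent_intervals
        (hgc.intervalIntegrable (μ := volume) 0 x) (hgc.intervalIntegrable (μ := volume) x 1)
      show (∫ s in x..(1:ℝ), g s) = (∫ s in (0:ℝ)..1, g s) - ∫ s in (0:ℝ)..x, g s
      linarith [this]
    have hR : (∫ s in x..(1:ℝ), (((max x s) ^ (1 - k) - 1) / (1 - k) - b / a) * s ^ k * φ s)
        = H x - b / a * (G 1 - G x) := by
      rw [intervalIntegral.integral_congr hright,
        intervalIntegral.integral_sub (hwc.intervalIntegrable (μ := volume) _ _)
          ((hgc.const_mul (b / a)).intervalIntegrable (μ := volume) _ _),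
        intervalIntegral.integral_const_mul, hGx1]
    have hI1 : (∫ s in Icc (0:ℝ) 1, (((max x s) ^ (1 - k) - 1) / (1 - k) - b / a) * s ^ k * φ s)
        = ∫ s in (0:ℝ)..1, (((max x s) ^ (1 - k) - 1) / (1 - k) - b / a) * s ^ k * φ s := by
      rw [MeasureTheory.integral_Icc_eq_integral_Ioc,
        intervalIntegral.integral_of_le (by norm_num : (0:ℝ) ≤ 1)]
    rw [heq x ⟨hx0, hx1⟩, hI1, hsplit, hL, hR]
    ring
  refine ⟨?_, ?_, ?_, ?_⟩
  · -- claim 1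
    intro x hx
    obtain ⟨hx0, hx1⟩ := hx
    have hu : HasDerivAt (fun t : ℝ => (t ^ (1 - k) - 1) / (1 - k)) (x ^ (-k)) x := by
      have h := ((Real.hasDerivAt_rpow_const (p := 1 - k)
        (Or.inl (ne_of_gt hx0))).sub_const 1).div_const (1 - k)
      refine h.congr_deriv ?_
      rw [show (1:ℝ) - k - 1 = -k by ring]
      field_simp
    have hcomb : HasDerivAt
        (fun t => (c / a - b / a * G 1) + ((t ^ (1 - k) - 1) / (1 - k) * G t + H t))
        (x ^ (-k) * G x) x := by
      have h2 := ((hu.mul (hGder x)).add (hHder x)).const_add (c / a - b / a * G 1)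
      refine h2.congr_deriv ?_
      rw [huw x hx0.le]
      ring
    rw [hIccG x hx0.le]
    exact hcomb.hasDerivWithinAt.congr (fun t ht => hrep t ht) (hrep x ⟨hx0.le, hx1⟩)
  · -- claim 2
    intro x hx
    obtain ⟨hx0, hx1⟩ := hx
    have hev : (fun t => t ^ k * (t ^ (-k) * ∫ s in Icc (0:ℝ) t, s ^ k * φ s)) =ᶠ[𝓝 x] G := by
      filter_upwards [Ioi_mem_nhds hx0] with t ht
      rw [hIccG t (le_of_lt ht), ← mul_assoc, ← Real.rpow_add ht]
      norm_num
    exact (hGder x).congr_of_eventuallyEq hev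
  · -- claim 3
    obtain ⟨M, hM⟩ := isCompact_Icc.exists_bound_of_continuousOn
      (hφ.continuousOn : ContinuousOn φ (Icc (0:ℝ) 1))
    set M' := max M 0 with hM'def
    have hM'0 : 0 ≤ M' := le_max_right _ _
    have hM' : ∀ s ∈ Icc (0:ℝ) 1, |φ s| ≤ M' := fun s hs => le_trans (hM s hs) (le_max_left _ _)
    have hbound : ∀ x ∈ Ioo (0:ℝ) 1,
        ‖x ^ (-k) * ∫ s in Icc (0:ℝ) x, s ^ k * φ s‖ ≤ M' * x / (k + 1) := by
      rintro x ⟨hx0, hx1⟩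
      have hxk : (0:ℝ) < x ^ (-k) := Real.rpow_pos_of_pos hx0 _
      have hGb : ‖G x‖ ≤ M' * x ^ (k + 1) / (k + 1) := by
        have step1 : ‖G x‖ ≤ ∫ s in (0:ℝ)..x, ‖g s‖ :=
          intervalIntegral.norm_integral_le_integral_norm hx0.le
        have step2 : (∫ s in (0:ℝ)..x, ‖g s‖) ≤ ∫ s in (0:ℝ)..x, M' * s ^ k := by
          apply intervalIntegral.integral_mono_on hx0.le
            (hgc.norm.intervalIntegrable _ _)
            ((continuous_const.mul hpow).intervalIntegrable _ _)
          rintro s ⟨hs0, hsx⟩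
          have hs1 : s ∈ Icc (0:ℝ) 1 := ⟨hs0, le_trans hsx hx1.le⟩
          have hk0 : (0:ℝ) ≤ s ^ k := Real.rpow_nonneg hs0 _
          calc ‖g s‖ = |s ^ k| * |φ s| := abs_mul _ _
            _ = s ^ k * |φ s| := by rw [abs_of_nonneg hk0]
            _ ≤ s ^ k * M' := mul_le_mul_of_nonneg_left (hM' s hs1) hk0
            _ = M' * s ^ k := mul_comm _ _
        have step3 : (∫ s in (0:ℝ)..x, M' * s ^ k) = M' * x ^ (k + 1) / (k + 1) := by
          rw [intervalIntegral.integral_const_mul, integral_rpow (Or.inl (by linarith)),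
            Real.zero_rpow (by positivity), sub_zero]
          ring
        calc ‖G x‖ ≤ ∫ s in (0:ℝ)..x, ‖g s‖ := step1
          _ ≤ ∫ s in (0:ℝ)..x, M' * s ^ k := step2
          _ = M' * x ^ (k + 1) / (k + 1) := step3
      rw [hIccG x hx0.le]
      calc ‖x ^ (-k) * G x‖ = x ^ (-k) * ‖G x‖ := by
            rw [norm_mul, Real.norm_eq_abs, abs_of_pos hxk]
        _ ≤ x ^ (-k) * (M' * x ^ (k + 1) / (k + 1)) := mul_le_mul_of_nonneg_left hGb hxk.le
        _ = M' * (x ^ (-k) * x ^ (k + 1)) / (k + 1) := by ring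
        _ = M' * x / (k + 1) := by
            rw [← Real.rpow_add hx0]
            norm_num
    apply squeeze_zero_norm'
      (t₀ := 𝓝[>] (0:ℝ)) (a := fun x => M' * x / (k + 1))
    · filter_upwards [Ioo_mem_nhdsGT_of_mem (left_mem_Ico.2 one_pos)] with t ht
      exact hbound t ht
    · have hc : Continuous (fun x : ℝ => M' * x / (k + 1)) := by continuity
      have h : Tendsto (fun x : ℝ => M' * x / (k + 1)) (𝓝[>] (0:ℝ)) (𝓝 (M' * 0 / (k + 1))) :=
        (hc.tendsto 0).mono_left (nhdsWithin_le_nhds (s := Ioi 0))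
      simpa using h
  · -- claim 4
    have h1 : y 1 = c / a + (-(b / a)) * ∫ s in Icc (0:ℝ) 1, s ^ k * φ s := by
      rw [heq 1 (right_mem_Icc.2 zero_le_one), ← MeasureTheory.integral_const_mul]
      congr 1
      apply MeasureTheory.setIntegral_congr_fun measurableSet_Icc
      intro s hs
      have hms : max (1:ℝ) s = 1 := max_eq_left hs.2
      show (((max 1 s) ^ (1 - k) - 1) / (1 - k) - b / a) * s ^ k * φ s
          = -(b / a) * (s ^ k * φ s)
      rw [hms, Real.one_rpow]
      ring
    rw [h1, Real.one_rpow]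
    field_simp
    try ring

theorem stmt11 (k₁ k₂ a₁ a₂ b₁ b₂ c₁ c₂ : ℝ)
    (hk₁ : 0 ≤ k₁) (hk₂ : 0 ≤ k₂) (hk₁1 : k₁ ≠ 1) (hk₂1 : k₂ ≠ 1)
    (ha₁ : a₁ ≠ 0) (ha₂ : a₂ ≠ 0)
    (f₁ f₂ : ℝ → ℝ → ℝ → ℝ)
    (hf₁c : ContinuousOn (fun q : ℝ × ℝ × ℝ => f₁ q.1 q.2.1 q.2.2)
      (Icc (0:ℝ) 1 ×ˢ (univ : Set (ℝ × ℝ))))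
    (hf₂c : ContinuousOn (fun q : ℝ × ℝ × ℝ => f₂ q.1 q.2.1 q.2.2)
      (Icc (0:ℝ) 1 ×ˢ (univ : Set (ℝ × ℝ))))
    (y₁ y₂ : ℝ → ℝ)
    (hy₁c : ContinuousOn y₁ (Icc 0 1)) (hy₂c : ContinuousOn y₂ (Icc 0 1))
    (heq₁ : ∀ x ∈ Icc (0:ℝ) 1, y₁ x = c₁ / a₁ + ∫ s in Icc (0:ℝ) 1,
      (((max x s) ^ (1 - k₁) - 1) / (1 - k₁) - b₁ / a₁) * s ^ k₁ * f₁ s (y₁ s) (y₂ s))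
    (heq₂ : ∀ x ∈ Icc (0:ℝ) 1, y₂ x = c₂ / a₂ + ∫ s in Icc (0:ℝ) 1,
      (((max x s) ^ (1 - k₂) - 1) / (1 - k₂) - b₂ / a₂) * s ^ k₂ * f₂ s (y₁ s) (y₂ s)) :
    let d₁ : ℝ → ℝ := fun x => x ^ (-k₁) * ∫ s in Icc (0:ℝ) x, s ^ k₁ * f₁ s (y₁ s) (y₂ s)
    let d₂ : ℝ → ℝ := fun x => x ^ (-k₂) * ∫ s in Icc (0:ℝ) x, s ^ k₂ * f₂ s (y₁ s) (y₂ s)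
    ((∀ x ∈ Ioc (0:ℝ) 1, HasDerivWithinAt y₁ (d₁ x) (Icc (0:ℝ) 1) x) ∧
     (∀ x ∈ Ioo (0:ℝ) 1, HasDerivAt (fun t => t ^ k₁ * d₁ t) (x ^ k₁ * f₁ x (y₁ x) (y₂ x)) x) ∧
     Tendsto d₁ (nhdsWithin 0 (Ioi 0)) (nhds 0) ∧
     a₁ * y₁ 1 + b₁ * d₁ 1 = c₁) ∧
    ((∀ x ∈ Ioc (0:ℝ) 1, HasDerivWithinAt y₂ (d₂ x) (Icc (0:ℝ) 1) x) ∧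
     (∀ x ∈ Ioo (0:ℝ) 1, HasDerivAt (fun t => t ^ k₂ * d₂ t) (x ^ k₂ * f₂ x (y₁ x) (y₂ x)) x) ∧
     Tendsto d₂ (nhdsWithin 0 (Ioi 0)) (nhds 0) ∧
     a₂ * y₂ 1 + b₂ * d₂ 1 = c₂) := by
  intro d₁ d₂
  -- the projection onto [0,1]
  set p : ℝ → ℝ := fun t => min (max t 0) 1 with hpdef
  have hp : Continuous p := (continuous_id.max continuous_const).min continuous_const
  have hpmem : ∀ t, p t ∈ Icc (0:ℝ) 1 :=
    fun t => ⟨le_min (le_max_right _ _) zero_le_one, min_le_right _ _⟩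
  have hpid : ∀ t ∈ Icc (0:ℝ) 1, p t = t := by
    intro t ht
    show min (max t 0) 1 = t
    rw [max_eq_left ht.1, min_eq_left ht.2]
  have hycont : ∀ (z : ℝ → ℝ), ContinuousOn z (Icc (0:ℝ) 1) → Continuous (fun t => z (p t)) :=
    fun z hz => hz.comp_continuous hp hpmem
  have key : ∀ (k a b c : ℝ), 0 ≤ k → k ≠ 1 → a ≠ 0 →
      ∀ (f : ℝ → ℝ → ℝ → ℝ),
      ContinuousOn (fun q : ℝ × ℝ × ℝ => f q.1 q.2.1 q.2.2)
        (Icc (0:ℝ) 1 ×ˢ (univ : Set (ℝ × ℝ))) →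
      ∀ (y : ℝ → ℝ),
      (∀ x ∈ Icc (0:ℝ) 1, y x = c / a + ∫ s in Icc (0:ℝ) 1,
        (((max x s) ^ (1 - k) - 1) / (1 - k) - b / a) * s ^ k * f s (y₁ s) (y₂ s)) →
      (∀ x ∈ Ioc (0:ℝ) 1, HasDerivWithinAt y
          (x ^ (-k) * ∫ s in Icc (0:ℝ) x, s ^ k * f s (y₁ s) (y₂ s)) (Icc (0:ℝ) 1) x) ∧
      (∀ x ∈ Ioo (0:ℝ) 1, HasDerivAt
          (fun t => t ^ k * (t ^ (-k) * ∫ s in Icc (0:ℝ) t, s ^ k * f s (y₁ s) (y₂ s)))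
          (x ^ k * f x (y₁ x) (y₂ x)) x) ∧
      Tendsto (fun x => x ^ (-k) * ∫ s in Icc (0:ℝ) x, s ^ k * f s (y₁ s) (y₂ s))
        (𝓝[>] (0:ℝ)) (𝓝 0) ∧
      a * y 1 + b * ((1:ℝ) ^ (-k) * ∫ s in Icc (0:ℝ) 1, s ^ k * f s (y₁ s) (y₂ s)) = c := by
    intro k a b c hk hk1 ha f hfc y heq
    set φ : ℝ → ℝ := fun t => f (p t) (y₁ (p t)) (y₂ (p t)) with hφdef
    have hφc : Continuous φ := by
      have hq : Continuous (fun t : ℝ => ((p t, (y₁ (p t), y₂ (p t))) : ℝ × ℝ × ℝ)) :=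
        hp.prodMk ((hycont y₁ hy₁c).prodMk (hycont y₂ hy₂c))
      exact hfc.comp_continuous hq (fun t => ⟨hpmem t, trivial⟩)
    have hφeq : ∀ s ∈ Icc (0:ℝ) 1, φ s = f s (y₁ s) (y₂ s) := by
      intro s hs
      show f (p s) (y₁ (p s)) (y₂ (p s)) = f s (y₁ s) (y₂ s)
      rw [hpid s hs]
    have hint : ∀ x ∈ Icc (0:ℝ) 1,
        (∫ s in Icc (0:ℝ) x, s ^ k * f s (y₁ s) (y₂ s)) = ∫ s in Icc (0:ℝ) x, s ^ k * φ s := by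
      intro x hx
      apply MeasureTheory.setIntegral_congr_fun measurableSet_Icc
      intro s hs
      dsimp only
      rw [hφeq s ⟨hs.1, le_trans hs.2 hx.2⟩]
    have heq' : ∀ x ∈ Icc (0:ℝ) 1, y x = c / a + ∫ s in Icc (0:ℝ) 1,
        (((max x s) ^ (1 - k) - 1) / (1 - k) - b / a) * s ^ k * φ s := by
      intro x hx
      rw [heq x hx]
      congr 1
      apply MeasureTheory.setIntegral_congr_fun measurableSet_Icc
      intro s hs
      dsimp only
      rw [hφeq s hs]
    obtain ⟨K1, K2, K3, K4⟩ := laneEmden_aux k a b c hk hk1 ha φ hφc y heq'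
    refine ⟨?_, ?_, ?_, ?_⟩
    · intro x hx
      rw [hint x ⟨hx.1.le, hx.2⟩]
      exact K1 x hx
    · intro x hx
      have h2 := K2 x hx
      rw [hφeq x ⟨hx.1.le, hx.2.le⟩] at h2
      apply h2.congr_of_eventuallyEq
      filter_upwards [Ioo_mem_nhds hx.1 hx.2] with t ht
      rw [hint t ⟨ht.1.le, ht.2.le⟩]
    · apply K3.congr'
      filter_upwards [Ioo_mem_nhdsGT_of_mem (left_mem_Ico.2 one_pos)] with t ht
      rw [hint t ⟨ht.1.le, ht.2.le⟩]
    · rw [← hint 1 (right_mem_Icc.2 zero_le_one)] at K4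
      exact K4
  exact ⟨key k₁ a₁ b₁ c₁ hk₁ hk₁1 ha₁ f₁ hf₁c y₁ heq₁,
         key k₂ a₂ b₂ c₂ hk₂ hk₂1 ha₂ f₂ hf₂c y₂ heq₂⟩
end

section
/- (Converse: every solution of the singular BVP satisfies the integral equation, $k\ne1$.) Let $k\ge 0$ be a real number with $k\ne 1$, let $a,b,c$ be reals with $a\ne 0$, and let $F\colon[0,1]\to\mathbb{R}$ be continuous. Suppose $y\colon[0,1]\to\mathbb{R}$ is continuous, differentiable on $(0,1]$, the function $x\mapsto x^{k}y'(x)$ is differentiable on $(0,1)$ with $\dfrac{d}{dx}\big(x^{k}y'(x)\big)=x^{k}F(x)$ for all $x\in(0,1)$, $\lim_{x\to 0^+}x^{k}y'(x)=0$, and $a\,y(1)+b\,y'(1)=c$. Then for every $x\in[0,1]$, $y(x)=\dfrac{c}{a}+\int_0^1 G(x,s)\,s^{k}F(s)\,ds$, where $G(x,s)=\dfrac{\max(x,s)^{1-k}-1}{1-k}-\dfrac{b}{a}$. -/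
open MeasureTheory Set Filter Topology

theorem stmt12 (k a b c : ℝ) (hk : 0 ≤ k) (hk1 : k ≠ 1) (ha : a ≠ 0)
    (F y y' : ℝ → ℝ) (hF : ContinuousOn F (Icc 0 1))
    (hyc : ContinuousOn y (Icc 0 1))
    (hderiv : ∀ x ∈ Ioc (0:ℝ) 1, HasDerivWithinAt y (y' x) (Icc (0:ℝ) 1) x)
    (hode : ∀ x ∈ Ioo (0:ℝ) 1, HasDerivAt (fun t => t ^ k * y' t) (x ^ k * F x) x)
    (hlim : Tendsto (fun x => x ^ k * y' x) (nhdsWithin 0 (Ioi 0)) (nhds 0))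
    (hbc : a * y 1 + b * y' 1 = c) :
    ∀ x ∈ Icc (0:ℝ) 1,
      y x = c / a + ∫ s in Icc (0:ℝ) 1,
        (((max x s) ^ (1 - k) - 1) / (1 - k) - b / a) * s ^ k * F s := by
  have h1k : (1:ℝ) - k ≠ 0 := sub_ne_zero.mpr (Ne.symm hk1)
  have hpow : Continuous fun s : ℝ => s ^ k := Real.continuous_rpow_const hk
  set f : ℝ → ℝ := fun s => s ^ k * F s with hf_def
  have hfc : ContinuousOn f (Icc 0 1) := hpow.continuousOn.mul hF
  set g : ℝ → ℝ := fun s => (s - s ^ k) / (1 - k) * F s - b / a * (s ^ k * F s) with hg_def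
  have hgc : ContinuousOn g (Icc 0 1) :=
    (((continuous_id.sub hpow).div_const _).continuousOn.mul hF).sub
      (continuousOn_const.mul hfc)
  set A : ℝ → ℝ := fun x => (x ^ (1 - k) - 1) / (1 - k) - b / a with hA_def
  have hgA : ∀ s : ℝ, 0 ≤ s → g s = A s * (s ^ k * F s) := by
    intro s hs
    rcases hs.eq_or_lt with rfl | hs
    · rcases eq_or_lt_of_le hk with rfl | hk0
      · simp only [hg_def, hA_def, Real.zero_rpow h1k, Real.rpow_zero]
        ring
      · simp [hg_def, hA_def, Real.zero_rpow (ne_of_gt hk0), Real.zero_rpow h1k]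
    · have hrw : s ^ (1 - k) * s ^ k = s := by
        rw [← Real.rpow_add hs]; norm_num
      simp only [hg_def, hA_def]
      field_simp
      linear_combination (-(a * F s)) * hrw
  -- integrability
  have hfi : ∀ u v : ℝ, u ∈ Icc (0:ℝ) 1 → v ∈ Icc (0:ℝ) 1 → IntervalIntegrable f volume u v := by
    intro u v hu hv
    exact (hfc.mono (uIcc_subset_Icc hu hv)).intervalIntegrable
  have hgi : ∀ u v : ℝ, u ∈ Icc (0:ℝ) 1 → v ∈ Icc (0:ℝ) 1 → IntervalIntegrable g volume u v := by
    intro u v hu hv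
    exact (hgc.mono (uIcc_subset_Icc hu hv)).intervalIntegrable
  have h01 : (0:ℝ) ∈ Icc (0:ℝ) 1 := ⟨le_rfl, zero_le_one⟩
  have h11 : (1:ℝ) ∈ Icc (0:ℝ) 1 := ⟨zero_le_one, le_rfl⟩
  set H : ℝ → ℝ := fun x => ∫ t in (0:ℝ)..x, f t with hH_def
  have hH0 : H 0 = 0 := intervalIntegral.integral_same
  have Hcont : ContinuousOn H (Icc 0 1) := by
    have := intervalIntegral.continuousOn_primitive_interval (a := 0) (b := 1)
      (μ := volume) (f := f) (by rw [uIcc_of_le zero_le_one]; exact hfc.integrableOn_Icc)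
    rwa [uIcc_of_le zero_le_one] at this
  have HderivAt : ∀ x ∈ Ioo (0:ℝ) 1, HasDerivAt H (f x) x := by
    intro x hx
    have hmem : Icc (0:ℝ) 1 ∈ 𝓝 x := Icc_mem_nhds hx.1 hx.2
    exact intervalIntegral.integral_hasDerivAt_right
      (hfi 0 x h01 ⟨hx.1.le, hx.2.le⟩)
      (ContinuousOn.stronglyMeasurableAtFilter isOpen_Ioo
        (hfc.mono Ioo_subset_Icc_self) x hx)
      (hfc.continuousAt hmem)
  -- constancy helper
  have constAux : ∀ w : ℝ → ℝ, (∀ t ∈ Ioo (0:ℝ) 1, HasDerivAt w 0 t) →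
      ∀ u ∈ Ioo (0:ℝ) 1, ∀ v ∈ Ioo (0:ℝ) 1, u ≤ v → w v = w u := by
    intro w hw u hu v hv huv
    have hsub : Icc u v ⊆ Ioo (0:ℝ) 1 := fun t ht =>
      ⟨lt_of_lt_of_le hu.1 ht.1, lt_of_le_of_lt ht.2 hv.2⟩
    exact constant_of_has_deriv_right_zero
      (fun t ht => (hw t (hsub ht)).continuousAt.continuousWithinAt)
      (fun t ht => (hw t (hsub (Ico_subset_Icc_self ht))).hasDerivWithinAt)
      v ⟨huv, le_rfl⟩
  -- key identity
  have key : ∀ x ∈ Ioo (0:ℝ) 1, x ^ k * y' x = H x := by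
    set w : ℝ → ℝ := fun t => t ^ k * y' t - H t with hw_def
    have hwd : ∀ t ∈ Ioo (0:ℝ) 1, HasDerivAt w 0 t := by
      intro t ht
      have h2 : HasDerivAt w (t ^ k * F t - t ^ k * F t) t := (hode t ht).sub (HderivAt t ht)
      rwa [sub_self] at h2
    have hwlim : Tendsto w (𝓝[Ioo (0:ℝ) 1] 0) (𝓝 0) := by
      have l1 : Tendsto (fun t => t ^ k * y' t) (𝓝[Ioo (0:ℝ) 1] 0) (𝓝 0) :=
        hlim.mono_left (nhdsWithin_mono 0 Ioo_subset_Ioi_self)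
      have l2 : Tendsto H (𝓝[Ioo (0:ℝ) 1] 0) (𝓝 0) := by
        have := (Hcont 0 h01).mono_left (nhdsWithin_mono 0 Ioo_subset_Icc_self)
        rwa [hH0] at this
      simpa using l1.sub l2
    intro x hx
    have hconst : ∀ᶠ t in 𝓝[Ioo (0:ℝ) x] 0, w x = w t := by
      filter_upwards [self_mem_nhdsWithin] with t ht
      exact constAux w hwd t ⟨ht.1, ht.2.trans hx.2⟩ x hx ht.2.le
    have hne : (𝓝[Ioo (0:ℝ) x] 0).NeBot := left_nhdsWithin_Ioo_neBot hx.1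
    have l1 : Tendsto w (𝓝[Ioo (0:ℝ) x] 0) (𝓝 (w x)) :=
      tendsto_const_nhds.congr' hconst
    have l2 : Tendsto w (𝓝[Ioo (0:ℝ) x] 0) (𝓝 0) :=
      hwlim.mono_left (nhdsWithin_mono 0 (fun t ht => ⟨ht.1, ht.2.trans hx.2⟩))
    have h0 : w x = 0 := tendsto_nhds_unique l1 l2
    have := sub_eq_zero.mp h0
    simpa [hw_def] using this
  have yder : ∀ x ∈ Ioo (0:ℝ) 1, y' x = x ^ (-k) * H x := by
    intro x hx
    have hxk : (x:ℝ) ^ k ≠ 0 := (Real.rpow_pos_of_pos hx.1 k).ne'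
    rw [← key x hx, Real.rpow_neg hx.1.le, inv_mul_cancel_left₀ hxk]
  set B : ℝ → ℝ := fun x => ∫ s in x..(1:ℝ), g s with hB_def
  have hB1 : B 1 = 0 := intervalIntegral.integral_same
  have Bcont : ContinuousOn B (Icc 0 1) := by
    have := intervalIntegral.continuousOn_primitive_interval_left (a := 0) (b := 1)
      (μ := volume) (f := g) (by rw [uIcc_of_le zero_le_one]; exact hgc.integrableOn_Icc)
    rwa [uIcc_of_le zero_le_one] at this
  have Bderiv : ∀ x ∈ Ioo (0:ℝ) 1, HasDerivAt B (-g x) x := by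
    intro x hx
    exact intervalIntegral.integral_hasDerivAt_left
      (hgi x 1 ⟨hx.1.le, hx.2.le⟩ h11)
      (ContinuousOn.stronglyMeasurableAtFilter isOpen_Ioo
        (hgc.mono Ioo_subset_Icc_self) x hx)
      (hgc.continuousAt (Icc_mem_nhds hx.1 hx.2))
  have Aderiv : ∀ x : ℝ, 0 < x → HasDerivAt A (x ^ (-k)) x := by
    intro x hx
    have h := (((Real.hasDerivAt_rpow_const (p := 1 - k) (Or.inl hx.ne')).sub_const
      1).div_const (1 - k)).sub_const (b / a)
    have he : (1:ℝ) - k - 1 = -k := by ring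
    rw [he] at h
    refine h.congr_deriv ?_
    field_simp
  set Φ : ℝ → ℝ := fun x => c / a + (A x * H x + B x) with hPhi_def
  have Φderiv : ∀ x ∈ Ioo (0:ℝ) 1, HasDerivAt Φ (y' x) x := by
    intro x hx
    have h := (((Aderiv x hx.1).mul (HderivAt x hx)).add (Bderiv x hx)).const_add (c / a)
    refine h.congr_deriv ?_
    rw [yder x hx, hgA x hx.1.le]
    simp only [hf_def]
    ring
  have hyD : ∀ x ∈ Ioo (0:ℝ) 1, HasDerivAt y (y' x) x := fun x hx =>
    (hderiv x ⟨hx.1, hx.2.le⟩).hasDerivAt (Icc_mem_nhds hx.1 hx.2)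
  set D : ℝ → ℝ := fun x => y x - Φ x with hD_def
  have hDd : ∀ x ∈ Ioo (0:ℝ) 1, HasDerivAt D 0 x := by
    intro x hx
    have h2 : HasDerivAt D (y' x - y' x) x := (hyD x hx).sub (Φderiv x hx)
    rwa [sub_self] at h2
  have hhalf : (1/2 : ℝ) ∈ Ioo (0:ℝ) 1 := by norm_num
  set C0 : ℝ := D (1/2) with hC0_def
  have hDC : ∀ x ∈ Ioo (0:ℝ) 1, D x = C0 := by
    intro x hx
    rcases le_total x (1/2) with h | h
    · exact (constAux D hDd x hx (1/2) hhalf h).symm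
    · exact constAux D hDd (1/2) hhalf x hx h
  -- continuity of Φ at 1 within Icc
  have hAcont1 : ContinuousAt A 1 := by
    have : ContinuousAt (fun x : ℝ => x ^ (1 - k)) 1 :=
      Real.continuousAt_rpow_const 1 (1 - k) (Or.inl one_ne_zero)
    exact ((this.sub continuousAt_const).div_const _).sub continuousAt_const
  have hΦcont1 : ContinuousWithinAt Φ (Icc (0:ℝ) 1) 1 :=
    (continuousWithinAt_const.add
      (((hAcont1.continuousWithinAt).mul (Hcont 1 h11)).add (Bcont 1 h11)))
  have hD1 : D 1 = C0 := by
    have hne : (𝓝[Ioo (0:ℝ) 1] 1).NeBot := right_nhdsWithin_Ioo_neBot zero_lt_one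
    have l1 : Tendsto D (𝓝[Ioo (0:ℝ) 1] 1) (𝓝 (D 1)) :=
      (((hyc 1 h11).sub hΦcont1).mono_left (nhdsWithin_mono 1 Ioo_subset_Icc_self))
    have l2 : Tendsto D (𝓝[Ioo (0:ℝ) 1] 1) (𝓝 C0) := by
      refine tendsto_const_nhds.congr' ?_
      filter_upwards [self_mem_nhdsWithin] with t ht
      exact (hDC t ht).symm
    exact tendsto_nhds_unique l1 l2
  have hyPhi : ∀ x ∈ Ioc (0:ℝ) 1, y x = Φ x + C0 := by
    intro x hx
    rcases hx.2.eq_or_lt with rfl | hx2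
    · have := hD1
      simp only [hD_def] at this
      linarith
    · have := hDC x ⟨hx.1, hx2⟩
      simp only [hD_def] at this
      linarith
  -- derivative of Φ at 1 within Icc
  have hmemIic : Icc (0:ℝ) 1 ∈ 𝓝[Iic 1] (1:ℝ) :=
    mem_nhdsWithin.mpr ⟨Ioi 0, isOpen_Ioi, mem_Ioi.mpr zero_lt_one,
      fun t ht => ⟨ht.1.le, ht.2⟩⟩
  have hH1 : HasDerivWithinAt H (f 1) (Icc (0:ℝ) 1) 1 := by
    have h := intervalIntegral.integral_hasDerivWithinAt_right (s := Iic 1) (t := Iic 1)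
      (hfi 0 1 h01 h11)
      ⟨Icc 0 1, hmemIic, hfc.aestronglyMeasurable measurableSet_Icc⟩
      ((hfc 1 h11).mono_of_mem_nhdsWithin hmemIic)
    exact h.mono Icc_subset_Iic_self
  have hB1d : HasDerivWithinAt B (-g 1) (Icc (0:ℝ) 1) 1 := by
    have h := intervalIntegral.integral_hasDerivWithinAt_left (s := Iic 1) (t := Iic 1)
      (hgi 1 1 h11 h11)
      ⟨Icc 0 1, hmemIic, hgc.aestronglyMeasurable measurableSet_Icc⟩
      ((hgc 1 h11).mono_of_mem_nhdsWithin hmemIic)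
    exact h.mono Icc_subset_Iic_self
  have hA1d : HasDerivWithinAt A 1 (Icc (0:ℝ) 1) 1 := by
    have := (Aderiv 1 zero_lt_one).hasDerivWithinAt (s := Icc (0:ℝ) 1)
    rwa [Real.one_rpow] at this
  have hΦ1d : HasDerivWithinAt Φ (H 1) (Icc (0:ℝ) 1) 1 := by
    have h := (((hA1d.mul hH1).add hB1d).const_add (c / a))
    refine h.congr_deriv ?_
    have hg1 : g 1 = A 1 * (1 ^ k * F 1) := hgA 1 zero_le_one
    simp only [hf_def]
    rw [hg1]
    ring
  have hy1d : HasDerivWithinAt y (H 1) (Icc (0:ℝ) 1) 1 := by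
    refine (hΦ1d.add_const C0).congr_of_eventuallyEq ?_ (hyPhi 1 (right_mem_Ioc.mpr zero_lt_one))
    have hmem2 : ∀ᶠ x in 𝓝[Icc (0:ℝ) 1] 1, (1/2:ℝ) < x :=
      (eventually_gt_nhds (by norm_num : (1/2:ℝ) < 1)).filter_mono nhdsWithin_le_nhds
    filter_upwards [self_mem_nhdsWithin, hmem2] with x hx h2
    exact hyPhi x ⟨lt_trans (by norm_num) h2, hx.2⟩
  have hy'1H : y' 1 = H 1 :=
    (uniqueDiffOn_Icc zero_lt_one 1 h11).eq_deriv _ (hderiv 1 (right_mem_Ioc.mpr zero_lt_one)) hy1d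
  have hA1v : A 1 = -(b/a) := by
    simp [hA_def, Real.one_rpow]
  have hPhi1 : Φ 1 = y 1 := by
    have hy1 : y 1 = c / a - b / a * y' 1 := by
      field_simp
      linarith [hbc]
    simp only [hPhi_def, hA1v, hB1, hy1, hy'1H]
    ring
  have hC0 : C0 = 0 := by
    have := hyPhi 1 (right_mem_Ioc.mpr zero_lt_one)
    rw [hPhi1] at this
    linarith
  have hyPhi' : ∀ x ∈ Ioc (0:ℝ) 1, y x = Φ x := by
    intro x hx
    have := hyPhi x hx
    rw [hC0, add_zero] at this
    exact this
  -- squeeze: A x * H x → 0 as x → 0⁺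
  obtain ⟨M, hM⟩ := isCompact_Icc.exists_bound_of_continuousOn hF
  have hM0 : 0 ≤ M := le_trans (norm_nonneg (F 0)) (hM 0 h01)
  set c1 : ℝ := |1 - k|⁻¹ with hc1_def
  have hc10 : 0 ≤ c1 := inv_nonneg.mpr (abs_nonneg _)
  set φ : ℝ → ℝ := fun x => x * x * (M * c1) + x ^ k * x * (M * c1 + |b/a| * M)
    with hφ_def
  have hbound : ∀ x ∈ Ioo (0:ℝ) 1, ‖A x * H x‖ ≤ φ x := by
    intro x hx
    have hHb : |H x| ≤ M * x ^ k * x := by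
      have hfb : ∀ s ∈ uIoc (0:ℝ) x, ‖f s‖ ≤ M * x ^ k := by
        intro s hs
        rw [uIoc_of_le hx.1.le] at hs
        have hsk : s ^ k ≤ x ^ k := Real.rpow_le_rpow hs.1.le hs.2 hk
        have hfs : ‖f s‖ = s ^ k * ‖F s‖ := by
          show ‖s ^ k * F s‖ = _
          rw [norm_mul, Real.norm_eq_abs (s ^ k),
            abs_of_nonneg (Real.rpow_nonneg hs.1.le k)]
        rw [hfs]
        calc s ^ k * ‖F s‖ ≤ x ^ k * M :=
              mul_le_mul hsk (hM s ⟨hs.1.le, le_trans hs.2 hx.2.le⟩)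
                (norm_nonneg _) (Real.rpow_nonneg hx.1.le k)
          _ = M * x ^ k := mul_comm _ _
      have h := intervalIntegral.norm_integral_le_of_norm_le_const hfb
      rw [sub_zero, abs_of_pos hx.1, Real.norm_eq_abs] at h
      exact h
    have hAb : |A x| ≤ (x ^ (1 - k) + 1) * c1 + |b/a| := by
      have h1 : |A x| ≤ |(x ^ (1 - k) - 1) / (1 - k)| + |b/a| := by
        simp only [hA_def]
        exact abs_sub _ _
      have h2 : |(x ^ (1 - k) - 1) / (1 - k)| ≤ (x ^ (1 - k) + 1) * c1 := by
        rw [abs_div, hc1_def, div_eq_mul_inv]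
        gcongr
        have := Real.rpow_nonneg hx.1.le (1 - k)
        calc |x ^ (1 - k) - 1| ≤ |x ^ (1 - k)| + |(1:ℝ)| := abs_sub _ _
          _ = x ^ (1 - k) + 1 := by rw [abs_of_nonneg this, abs_one]
      linarith
    have hrwx : x ^ (1 - k) * x ^ k = x := by
      rw [← Real.rpow_add hx.1]; norm_num
    have hA0 : (0:ℝ) ≤ (x ^ (1 - k) + 1) * c1 + |b/a| := by
      have := Real.rpow_nonneg hx.1.le (1 - k)
      positivity
    have hH0' : (0:ℝ) ≤ M * x ^ k * x :=
      mul_nonneg (mul_nonneg hM0 (Real.rpow_nonneg hx.1.le k)) hx.1.le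
    have hmain : |A x * H x| ≤ ((x ^ (1 - k) + 1) * c1 + |b/a|) * (M * x ^ k * x) := by
      rw [abs_mul]
      exact mul_le_mul hAb hHb (abs_nonneg _) hA0
    have heq : ((x ^ (1 - k) + 1) * c1 + |b/a|) * (M * x ^ k * x) = φ x := by
      simp only [hφ_def]
      linear_combination (M * c1 * x) * hrwx
    rw [Real.norm_eq_abs, ← heq]
    exact hmain
  have hAH0 : Tendsto (fun x => A x * H x) (𝓝[Ioo (0:ℝ) 1] 0) (𝓝 0) := by
    have t1 : Tendsto (fun x : ℝ => x) (𝓝[Ioo (0:ℝ) 1] 0) (𝓝 0) :=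
      tendsto_id.mono_right nhdsWithin_le_nhds
    have tk : Tendsto (fun x : ℝ => x ^ k) (𝓝[Ioo (0:ℝ) 1] 0) (𝓝 ((0:ℝ) ^ k)) :=
      (Real.continuousAt_rpow_const 0 k (Or.inr hk)).tendsto.mono_left nhdsWithin_le_nhds
    have tkx : Tendsto (fun x : ℝ => x ^ k * x) (𝓝[Ioo (0:ℝ) 1] 0) (𝓝 0) := by
      have := tk.mul t1
      simpa using this
    have tφ : Tendsto φ (𝓝[Ioo (0:ℝ) 1] 0) (𝓝 0) := by
      have := ((t1.mul t1).mul_const (M * c1)).add (tkx.mul_const (M * c1 + |b/a| * M))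
      simpa [hφ_def] using this
    exact squeeze_zero_norm' (by filter_upwards [self_mem_nhdsWithin] using hbound) tφ
  have hy0 : y 0 = c / a + (0 + B 0) := by
    have hne : (𝓝[Ioo (0:ℝ) 1] 0).NeBot := left_nhdsWithin_Ioo_neBot zero_lt_one
    have l1 : Tendsto y (𝓝[Ioo (0:ℝ) 1] 0) (𝓝 (y 0)) :=
      (hyc 0 h01).mono_left (nhdsWithin_mono 0 Ioo_subset_Icc_self)
    have hBt : Tendsto B (𝓝[Ioo (0:ℝ) 1] 0) (𝓝 (B 0)) :=
      (Bcont 0 h01).mono_left (nhdsWithin_mono 0 Ioo_subset_Icc_self)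
    have l2 : Tendsto Φ (𝓝[Ioo (0:ℝ) 1] 0) (𝓝 (c / a + (0 + B 0))) :=
      tendsto_const_nhds.add (hAH0.add hBt)
    have l2' : Tendsto y (𝓝[Ioo (0:ℝ) 1] 0) (𝓝 (c / a + (0 + B 0))) := by
      refine l2.congr' ?_
      filter_upwards [self_mem_nhdsWithin] with t ht
      exact (hyPhi' t ⟨ht.1, ht.2.le⟩).symm
    exact tendsto_nhds_unique l1 l2'
  -- rewrite the target integral
  have hrhs : ∀ x ∈ Icc (0:ℝ) 1,
      (∫ s in Icc (0:ℝ) 1, (((max x s) ^ (1 - k) - 1) / (1 - k) - b / a) * s ^ k * F s)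
        = A x * H x + B x := by
    intro x hx
    rw [integral_Icc_eq_integral_Ioc, ← intervalIntegral.integral_of_le zero_le_one]
    rcases hx.1.eq_or_lt with rfl | hx0
    · have hcg : EqOn (fun s => (((max (0:ℝ) s) ^ (1 - k) - 1) / (1 - k) - b / a) * s ^ k * F s)
          g (uIcc (0:ℝ) 1) := by
        intro s hs
        rw [uIcc_of_le zero_le_one] at hs
        simp only []
        rw [max_eq_right hs.1, hgA s hs.1]
        simp only [hA_def]
        ring
      rw [intervalIntegral.integral_congr hcg, hH0, mul_zero, zero_add]
    · have hxle : x ≤ 1 := hx.2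
      have hcont_int : ContinuousOn
          (fun s => (((max x s) ^ (1 - k) - 1) / (1 - k) - b / a) * s ^ k * F s)
          (Icc 0 1) := by
        refine ContinuousOn.mul (ContinuousOn.mul ?_ hpow.continuousOn) hF
        refine ContinuousOn.sub (ContinuousOn.div_const (ContinuousOn.sub ?_
          continuousOn_const) _) continuousOn_const
        intro s _
        exact ((Real.continuousAt_rpow_const (max x s) (1 - k)
          (Or.inl (lt_of_lt_of_le hx0 (le_max_left x s)).ne')).comp
          ((continuous_const.max continuous_id).continuousAt)).continuousWithinAt
      have hi1 : IntervalIntegrable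
          (fun s => (((max x s) ^ (1 - k) - 1) / (1 - k) - b / a) * s ^ k * F s)
          volume 0 x :=
        (hcont_int.mono (uIcc_subset_Icc h01 ⟨hx0.le, hxle⟩)).intervalIntegrable
      have hi2 : IntervalIntegrable
          (fun s => (((max x s) ^ (1 - k) - 1) / (1 - k) - b / a) * s ^ k * F s)
          volume x 1 :=
        (hcont_int.mono (uIcc_subset_Icc ⟨hx0.le, hxle⟩ h11)).intervalIntegrable
      rw [← intervalIntegral.integral_add_adjacent_intervals hi1 hi2]
      have e1 : (∫ s in (0:ℝ)..x,
          (((max x s) ^ (1 - k) - 1) / (1 - k) - b / a) * s ^ k * F s) = A x * H x := by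
        have hcg : EqOn (fun s => (((max x s) ^ (1 - k) - 1) / (1 - k) - b / a) * s ^ k * F s)
            (fun s => A x * f s) (uIcc (0:ℝ) x) := by
          intro s hs
          rw [uIcc_of_le hx0.le] at hs
          simp only [hf_def, hA_def]
          rw [max_eq_left hs.2]
          ring
        rw [intervalIntegral.integral_congr hcg, intervalIntegral.integral_const_mul]
      have e2 : (∫ s in x..(1:ℝ),
          (((max x s) ^ (1 - k) - 1) / (1 - k) - b / a) * s ^ k * F s) = B x := by
        have hcg : EqOn (fun s => (((max x s) ^ (1 - k) - 1) / (1 - k) - b / a) * s ^ k * F s)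
            g (uIcc x 1) := by
          intro s hs
          rw [uIcc_of_le hxle] at hs
          simp only []
          rw [max_eq_right hs.1, hgA s (le_trans hx0.le hs.1)]
          simp only [hA_def]
          ring
        rw [intervalIntegral.integral_congr hcg]
      rw [e1, e2]
  -- conclusion
  intro x hx
  rw [hrhs x hx]
  rcases hx.1.eq_or_lt with rfl | hx0
  · rw [hH0, hy0]
    ring
  · exact hyPhi' x ⟨hx0, hx.2⟩
end
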